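/- arXiv:2304.07843 — 5 statements merged into one kernel-verified Lean document; each statement's English description precedes it below -/
import Mathlib

section
/- Let p be an odd prime and s a positive integer. Regard E_s(pλt) = Σ_{k=0}^{d(s)} p^k λ^k t^k/k! as a polynomial in the two variables λ and t with coefficients in ℤ_p. Then (∂/∂t) E_s(pλt) ≡ pλ·E_s(pλt) (mod p^s) and (∂/∂λ) E_s(pλt) ≡ pt·E_s(pλt) (mod p^s), both as congruences of polynomials in ℤ_p[λ,t]. -/
open MvPolynomial

private lemma aux_deriv {p : ℕ} [Fact p.Prime] (c : ℕ → ℚ_[p])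
    (hrec : ∀ k : ℕ, ((k+1 : ℕ) : ℚ_[p]) * c (k+1) = (p : ℚ_[p]) * c k)
    {i j : Fin 2} (hij : i ≠ j) (n : ℕ) :
    pderiv j (∑ k ∈ Finset.range (n+1), C (c k) * X i ^ k * X j ^ k)
      = C (p : ℚ_[p]) * X i * ∑ k ∈ Finset.range n, C (c k) * X i ^ k * X j ^ k := by
  rw [map_sum, Finset.sum_range_succ']
  have h0 : pderiv j (C (c 0) * X i ^ 0 * X (R := ℚ_[p]) j ^ 0) = 0 := by
    simp [pderiv_C]
  rw [h0, add_zero, Finset.mul_sum]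
  refine Finset.sum_congr rfl fun k _ => ?_
  rw [pderiv_mul, pderiv_mul, pderiv_C, pderiv_pow, pderiv_pow, pderiv_X_of_ne hij,
    pderiv_X_self,
    show ((k+1 : ℕ) : MvPolynomial (Fin 2) ℚ_[p]) = C ((k+1:ℕ) : ℚ_[p]) from
      (map_natCast (C : ℚ_[p] →+* MvPolynomial (Fin 2) ℚ_[p]) (k+1)).symm]
  have hC : (C (((k+1:ℕ) : ℚ_[p]) * c (k+1)) : MvPolynomial (Fin 2) ℚ_[p])
      = C ((p:ℚ_[p]) * c k) := by rw [hrec]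
  rw [C_mul, C_mul] at hC
  simp only [Nat.add_sub_cancel]
  linear_combination (X i ^ (k+1) * X (R := ℚ_[p]) j ^ k) * hC

private lemma aux_diff_eq {p : ℕ} [Fact p.Prime] (c : ℕ → ℚ_[p])
    (hrec : ∀ k : ℕ, ((k+1 : ℕ) : ℚ_[p]) * c (k+1) = (p : ℚ_[p]) * c k)
    {i j : Fin 2} (hij : i ≠ j) (n : ℕ) :
    pderiv j (∑ k ∈ Finset.range (n+1), C (c k) * X i ^ k * X j ^ k)
      - C (p : ℚ_[p]) * X i * (∑ k ∈ Finset.range (n+1), C (c k) * X i ^ k * X j ^ k)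
    = -(C ((p : ℚ_[p]) * c n) * X i ^ (n+1) * X j ^ n) := by
  rw [aux_deriv c hrec hij n, Finset.sum_range_succ, C_mul]
  ring

private lemma aux_coeff_bound {p : ℕ} [Fact p.Prime] (a : ℚ_[p]) (i j : Fin 2)
    (u v : ℕ) (mon : Fin 2 →₀ ℕ) :
    ‖coeff mon (C a * X i ^ u * X j ^ v)‖ ≤ ‖a‖ := by
  rw [mul_assoc, coeff_C_mul, X_pow_eq_monomial, X_pow_eq_monomial, monomial_mul,
    one_mul, coeff_monomial]
  split
  · simp
  · simp


/-- Let `p` be an odd prime and `s` a positive integer. Regard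
`E_s(pλt) = Σ_{k=0}^{d(s)} p^k λ^k t^k/k!` as a polynomial in the two variables
`λ` (the variable `X 0`) and `t` (the variable `X 1`) with coefficients in `ℤ_p ⊂ ℚ_p`.
Then `(∂/∂t) E_s(pλt) ≡ pλ·E_s(pλt) (mod p^s)` and
`(∂/∂λ) E_s(pλt) ≡ pt·E_s(pλt) (mod p^s)`, i.e., every coefficient of each
difference lies in `p^s ℤ_p`. -/
theorem trunc_exp_partial_derivs_congr (p : ℕ) [Fact p.Prime] (hodd : Odd p)
    (s : ℕ) (hs : 0 < s) :
    let d : ℕ := s * (p - 1) / (p - 2) + 1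
    let E : MvPolynomial (Fin 2) ℚ_[p] :=
      ∑ k ∈ Finset.range (d + 1),
        C ((p : ℚ_[p]) ^ k / (k.factorial : ℚ_[p])) * (X 0) ^ k * (X 1) ^ k
    (∀ mon : Fin 2 →₀ ℕ,
      ‖coeff mon (pderiv 1 E - C (p : ℚ_[p]) * X 0 * E)‖ ≤ (p : ℝ) ^ (-(s : ℤ))) ∧
    (∀ mon : Fin 2 →₀ ℕ,
      ‖coeff mon (pderiv 0 E - C (p : ℚ_[p]) * X 1 * E)‖ ≤ (p : ℝ) ^ (-(s : ℤ))) := by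
  intro d E
  have hp : p.Prime := Fact.out
  have hp3 : 3 ≤ p := by
    rcases hodd with ⟨m, hm⟩
    have := hp.two_le
    omega
  set c : ℕ → ℚ_[p] := fun k => (p : ℚ_[p]) ^ k / (k.factorial : ℚ_[p]) with hc
  have hpne : (p : ℚ_[p]) ≠ 0 := Nat.cast_ne_zero.mpr hp.ne_zero
  have hrec : ∀ k : ℕ, ((k+1 : ℕ) : ℚ_[p]) * c (k+1) = (p : ℚ_[p]) * c k := by
    intro k
    have h2 : ((k).factorial : ℚ_[p]) ≠ 0 := Nat.cast_ne_zero.mpr (Nat.factorial_ne_zero k)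
    have h3 : ((k : ℚ_[p]) + 1) ≠ 0 := Nat.cast_add_one_ne_zero k
    rw [hc]
    simp only [Nat.factorial_succ, pow_succ]
    push_cast
    field_simp
  have hdne : d ≠ 0 := Nat.succ_ne_zero _
  -- the key norm bound
  set v : ℕ := padicValNat p (d.factorial) with hv
  have hleg : (p - 1) * v = d - (p.digits d).sum := sub_one_mul_padicValNat_factorial d
  have hdig : 1 ≤ (p.digits d).sum := by
    by_contra h
    have h0 : (p.digits d).sum = 0 := by omega
    have hnil : p.digits d ≠ [] := Nat.digits_ne_nil_iff_ne_zero.mpr hdne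
    exact Nat.getLast_digit_ne_zero p hdne
      (List.sum_eq_zero_iff.mp h0 _ (List.getLast_mem hnil))
  have hdigle : (p.digits d).sum ≤ d := Nat.digit_sum_le p d
  have hlt : s * (p - 1) < d * (p - 2) := by
    have h := Nat.div_add_mod (s * (p-1)) (p-2)
    have hm : (s * (p-1)) % (p-2) < p - 2 := Nat.mod_lt _ (by omega)
    have he : d * (p - 2) = (p-2) * (s * (p-1) / (p-2)) + (p-2) := by
      show (s * (p-1) / (p-2) + 1) * (p-2) = _
      ring
    linarith
  have hkey : v + s ≤ d + 1 := by
    have h1p : 1 ≤ p := by omega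
    have h2p : 2 ≤ p := by omega
    have hZ : ((p:ℤ) - 1) * v = (d:ℤ) - ((p.digits d).sum : ℤ) := by
      have h := congrArg (Nat.cast : ℕ → ℤ) hleg
      rw [Nat.cast_mul, Nat.cast_sub hdigle, Nat.cast_sub h1p, Nat.cast_one] at h
      exact h
    have hltZ : (s:ℤ) * ((p:ℤ) - 1) < (d:ℤ) * ((p:ℤ) - 2) := by
      have h := (Nat.cast_lt (α := ℤ)).mpr hlt
      rw [Nat.cast_mul, Nat.cast_mul, Nat.cast_sub h1p, Nat.cast_sub h2p, Nat.cast_one,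
        Nat.cast_ofNat] at h
      exact h
    have hdigZ : (1:ℤ) ≤ ((p.digits d).sum : ℤ) := by exact_mod_cast hdig
    have h3 : (3:ℤ) ≤ (p:ℤ) := by exact_mod_cast hp3
    have e1 : (v : ℤ) * ((p:ℤ) - 1) ≤ (d:ℤ) - 1 := by nlinarith [hZ]
    have e2 : ((v : ℤ) + s) * ((p:ℤ) - 1) < ((d:ℤ) + 1) * ((p:ℤ) - 1) := by
      nlinarith [e1, hltZ]
    have e3 : (v : ℤ) + s < (d : ℤ) + 1 :=
      lt_of_mul_lt_mul_right e2 (by linarith : (0:ℤ) ≤ (p:ℤ) - 1)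
    exact_mod_cast e3.le
  have hnorm : ‖(p : ℚ_[p]) * c d‖ ≤ (p : ℝ) ^ (-(s : ℤ)) := by
    have hfacne : ((d.factorial : ℕ) : ℚ_[p]) ≠ 0 :=
      Nat.cast_ne_zero.mpr (Nat.factorial_ne_zero d)
    have hfac : ‖((d.factorial : ℕ) : ℚ_[p])‖ = (p : ℝ) ^ (-(v : ℤ)) := by
      rw [Padic.norm_eq_zpow_neg_valuation hfacne, Padic.valuation_natCast]
    have heq : (p : ℚ_[p]) * c d = (p : ℚ_[p]) ^ (d+1) / ((d.factorial : ℕ) : ℚ_[p]) := by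
      rw [hc]
      field_simp
      ring
    rw [heq, norm_div, Padic.norm_p_pow, hfac, ← zpow_sub₀ (by positivity)]
    have hbase : (1 : ℝ) < (p : ℝ) := by exact_mod_cast hp.one_lt
    apply zpow_le_zpow_right₀ hbase.le
    omega
  have hpR : (0:ℝ) < (p : ℝ) ^ (-(s : ℤ)) := by positivity
  constructor
  · intro mon
    have hE : E = ∑ k ∈ Finset.range (d+1), C (c k) * X 0 ^ k * X 1 ^ k := rfl
    rw [hE, aux_diff_eq c hrec (show (0:Fin 2) ≠ 1 by decide) d, coeff_neg, norm_neg]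
    exact (aux_coeff_bound _ 0 1 _ _ mon).trans hnorm
  · intro mon
    have hE : E = ∑ k ∈ Finset.range (d+1), C (c k) * X 1 ^ k * X 0 ^ k := by
      show (∑ k ∈ Finset.range (d+1), C (c k) * X 0 ^ k * X 1 ^ k) = _
      exact Finset.sum_congr rfl fun k _ => by ring
    rw [hE, aux_diff_eq c hrec (show (1:Fin 2) ≠ 0 by decide) d, coeff_neg, norm_neg]
    exact (aux_coeff_bound _ 1 0 _ _ mon).trans hnorm
end

section
/- Let p be an odd prime and s a positive integer. Then E_s(pλ(u+v)) ≡ E_s(pλu)·E_s(pλv) (mod p^s) as a congruence of polynomials in the variables λ, u, v with coefficients in ℤ_p. -/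
open MvPolynomial

lemma arith_aux (p s : ℕ) [Fact p.Prime] (hp3 : 3 ≤ p) (i j : ℕ)
    (hk : s * (p - 1) / (p - 2) + 1 < i + j) :
    padicValNat p i.factorial + padicValNat p j.factorial + s ≤ i + j := by
  have hA : 0 < p - 2 := by omega
  have h1 : (p - 1) * padicValNat p i.factorial ≤ i := by
    rw [sub_one_mul_padicValNat_factorial]; omega
  have h2 : (p - 1) * padicValNat p j.factorial ≤ j := by
    rw [sub_one_mul_padicValNat_factorial]; omega
  have h3 := Nat.div_add_mod (s * (p - 1)) (p - 2)
  have h4 := Nat.mod_lt (s * (p - 1)) hA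
  set q := s * (p - 1) / (p - 2) with hq
  set r := s * (p - 1) % (p - 2) with hr
  set vi := padicValNat p i.factorial
  set vj := padicValNat p j.factorial
  have key : (p - 1) * (vi + vj + s) < (p - 1) * (i + j) := by
    have hqk : q + 2 ≤ i + j := by omega
    have hsplit : p - 1 = (p - 2) + 1 := by omega
    rw [hsplit]
    nlinarith [h1, h2, h3, h4, hqk, Nat.mul_le_mul_left (p - 2) hqk]
  exact le_of_lt (Nat.lt_of_mul_lt_mul_left key)

lemma norm_aux (p : ℕ) [Fact p.Prime] (s i j : ℕ)
    (h : padicValNat p i.factorial + padicValNat p j.factorial + s ≤ i + j) :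
    ‖(p : ℚ_[p]) ^ i / (i.factorial : ℚ_[p]) * ((p : ℚ_[p]) ^ j / (j.factorial : ℚ_[p]))‖
      ≤ (p : ℝ) ^ (-(s : ℤ)) := by
  have hp1 : (1 : ℝ) ≤ p := by exact_mod_cast (Fact.out : p.Prime).one_lt.le
  have hif : (i.factorial : ℚ_[p]) ≠ 0 := by exact_mod_cast i.factorial_ne_zero
  have hjf : (j.factorial : ℚ_[p]) ≠ 0 := by exact_mod_cast j.factorial_ne_zero
  have hN : ((i.factorial * j.factorial : ℕ) : ℚ_[p]) ≠ 0 := by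
    push_cast; exact mul_ne_zero hif hjf
  have e1 : (p : ℚ_[p]) ^ i / (i.factorial : ℚ_[p]) * ((p : ℚ_[p]) ^ j / (j.factorial : ℚ_[p]))
      = (p : ℚ_[p]) ^ (i + j) / ((i.factorial * j.factorial : ℕ) : ℚ_[p]) := by
    push_cast
    rw [pow_add]
    ring
  rw [e1, norm_div, Padic.norm_p_pow, Padic.norm_eq_zpow_neg_valuation hN,
    Padic.valuation_natCast]
  rw [padicValNat.mul i.factorial_ne_zero j.factorial_ne_zero]
  rw [← zpow_sub₀ (by positivity : (p:ℝ) ≠ 0)]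
  apply zpow_le_zpow_right₀ hp1
  have h' : (padicValNat p i.factorial : ℤ) + (padicValNat p j.factorial : ℤ) + (s : ℤ)
      ≤ (i : ℤ) + (j : ℤ) := by exact_mod_cast h
  have : ((i + j : ℕ) : ℤ) = (i : ℤ) + (j : ℤ) := by push_cast; ring
  omega

variable (p : ℕ) [Fact p.Prime]

noncomputable def aa (k : ℕ) : ℚ_[p] := (p : ℚ_[p]) ^ k / (k.factorial : ℚ_[p])

noncomputable def trm (q : ℕ × ℕ) : MvPolynomial (Fin 3) ℚ_[p] :=
  monomial (Finsupp.single 0 (q.1 + q.2) + Finsupp.single 1 q.1 + Finsupp.single 2 q.2)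
    (aa p q.1 * aa p q.2)

lemma prod_term (i j : ℕ) :
    (C (aa p i) * (X 0 * X 1) ^ i) * (C (aa p j) * (X (0:Fin 3) * X 2) ^ j)
      = trm p (i, j) := by
  simp only [trm, mul_pow, X_pow_eq_monomial, monomial_mul, C_mul_monomial,
    one_mul, mul_one]
  congr 1
  · simp only [Finsupp.single_add]; abel_nf

lemma binom_term (k i : ℕ) (hik : i ≤ k) :
    C (aa p k) * (X (0:Fin 3) ^ k * (X 1 ^ i * X 2 ^ (k - i) * (k.choose i : MvPolynomial (Fin 3) ℚ_[p])))
      = trm p (i, k - i) := by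
  have hc : (k.choose i : MvPolynomial (Fin 3) ℚ_[p]) = C ((k.choose i : ℚ_[p])) := by
    simp
  have hcoeff : aa p k * (k.choose i : ℚ_[p]) = aa p i * aa p (k - i) := by
    have hif : (i.factorial : ℚ_[p]) ≠ 0 := by exact_mod_cast i.factorial_ne_zero
    have hkif : ((k-i).factorial : ℚ_[p]) ≠ 0 := by exact_mod_cast (k-i).factorial_ne_zero
    have hkf : (k.factorial : ℚ_[p]) ≠ 0 := by exact_mod_cast k.factorial_ne_zero
    rw [Nat.cast_choose ℚ_[p] hik]
    simp only [aa]
    have hpk : (p:ℚ_[p]) ^ i * (p:ℚ_[p]) ^ (k - i) = (p:ℚ_[p]) ^ k := by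
      rw [← pow_add, Nat.add_sub_cancel' hik]
    field_simp
    rw [hpk]
  rw [hc]
  simp only [trm, C_apply, X_pow_eq_monomial, monomial_mul, one_mul, mul_one]
  have hk : i + (k - i) = k := by omega
  rw [hk]
  congr 1
  rw [zero_add, add_zero, add_assoc]

lemma hadd_sum (d : ℕ) :
    ∑ k ∈ Finset.range (d+1), C (aa p k) * (X (0:Fin 3) * (X 1 + X 2)) ^ k
      = ∑ q ∈ (Finset.range (d+1) ×ˢ Finset.range (d+1)).filter (fun q => q.1 + q.2 ≤ d),
          trm p q := by
  have step : ∀ k ∈ Finset.range (d+1),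
      C (aa p k) * (X (0:Fin 3) * (X 1 + X 2)) ^ k
        = ∑ i ∈ Finset.range (k+1), trm p (i, k - i) := by
    intro k _
    rw [mul_pow, add_pow, Finset.mul_sum, Finset.mul_sum]
    refine Finset.sum_congr rfl fun i hi => ?_
    rw [Finset.mem_range, Nat.lt_succ_iff] at hi
    exact binom_term p k i hi
  rw [Finset.sum_congr rfl step, Finset.sum_sigma']
  refine Finset.sum_nbij' (fun x => (x.2, x.1 - x.2)) (fun q => ⟨q.1 + q.2, q.1⟩)
    ?_ ?_ ?_ ?_ ?_
  · rintro ⟨k, i⟩ hx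
    simp only [Finset.mem_sigma, Finset.mem_range, Nat.lt_succ_iff] at hx
    simp only [Finset.mem_filter, Finset.mem_product, Finset.mem_range, Nat.lt_succ_iff]
    omega
  · rintro ⟨i, j⟩ hq
    simp only [Finset.mem_filter, Finset.mem_product, Finset.mem_range, Nat.lt_succ_iff] at hq
    simp only [Finset.mem_sigma, Finset.mem_range, Nat.lt_succ_iff]
    omega
  · rintro ⟨k, i⟩ hx
    simp only [Finset.mem_sigma, Finset.mem_range, Nat.lt_succ_iff] at hx
    simp only [Sigma.mk.inj_iff]
    constructor
    · omega
    · exact HEq.symm (heq_of_eq rfl) |>.symm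
  · rintro ⟨i, j⟩ hq
    simp only [Finset.mem_filter, Finset.mem_product, Finset.mem_range, Nat.lt_succ_iff] at hq
    simp only [Prod.mk.injEq]
    exact ⟨trivial, by omega⟩
  · rintro ⟨k, i⟩ hx
    rfl

lemma hprod_sum (d : ℕ) :
    (∑ k ∈ Finset.range (d+1), C (aa p k) * (X (0:Fin 3) * X 1) ^ k) *
      (∑ k ∈ Finset.range (d+1), C (aa p k) * (X (0:Fin 3) * X 2) ^ k)
      = ∑ q ∈ Finset.range (d+1) ×ˢ Finset.range (d+1), trm p q := by
  rw [Finset.sum_mul_sum]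
  rw [Finset.sum_product]
  exact Finset.sum_congr rfl fun i _ => Finset.sum_congr rfl fun j _ => prod_term p i j

/-- Let `p` be an odd prime and `s` a positive integer. Then
`E_s(pλ(u+v)) ≡ E_s(pλu)·E_s(pλv) (mod p^s)` as a congruence of polynomials in
the variables `λ = X 0`, `u = X 1`, `v = X 2` with coefficients in `ℤ_p ⊂ ℚ_p`,
where `E_s(x) = Σ_{k=0}^{d(s)} x^k/k!` and `d(s) = ⌊s(p−1)/(p−2)⌋ + 1`.
The congruence means every coefficient of the difference lies in `p^s ℤ_p`. -/
theorem trunc_exp_add_congr (p : ℕ) [Fact p.Prime] (hodd : Odd p)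
    (s : ℕ) (hs : 0 < s) :
    let d : ℕ := s * (p - 1) / (p - 2) + 1
    let Es : MvPolynomial (Fin 3) ℚ_[p] → MvPolynomial (Fin 3) ℚ_[p] := fun w =>
      ∑ k ∈ Finset.range (d + 1),
        C ((p : ℚ_[p]) ^ k / (k.factorial : ℚ_[p])) * (X 0 * w) ^ k
    ∀ mon : Fin 3 →₀ ℕ,
      ‖coeff mon (Es (X 1 + X 2) - Es (X 1) * Es (X 2))‖ ≤ (p : ℝ) ^ (-(s : ℤ)) := by
  intro d Es mon
  classical
  have hp : p.Prime := Fact.out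
  have hp3 : 3 ≤ p := by
    obtain ⟨m, hm⟩ := hodd
    have := hp.two_le
    omega
  have hd : d = s * (p - 1) / (p - 2) + 1 := rfl
  have hEs : ∀ w, Es w = ∑ k ∈ Finset.range (d + 1), C (aa p k) * (X 0 * w) ^ k :=
    fun w => rfl
  have key : Es (X 1 + X 2) - Es (X 1) * Es (X 2)
      = -∑ q ∈ (Finset.range (d+1) ×ˢ Finset.range (d+1)).filter
            (fun q => ¬ q.1 + q.2 ≤ d), trm p q := by
    rw [hEs, hEs, hEs, hadd_sum p d, hprod_sum p d,
      ← Finset.sum_filter_add_sum_filter_not (Finset.range (d+1) ×ˢ Finset.range (d+1))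
        (fun q => q.1 + q.2 ≤ d) (trm p)]
    ring
  rw [key, coeff_neg, norm_neg, coeff_sum]
  apply IsUltrametricDist.norm_sum_le_of_forall_le_of_nonneg
  · positivity
  · rintro ⟨i, j⟩ hq
    simp only [Finset.mem_filter, Finset.mem_product, Finset.mem_range,
      Nat.lt_succ_iff, not_le] at hq
    rw [trm, coeff_monomial]
    split
    · exact norm_aux p s i j (arith_aux p s hp3 i j (hd ▸ hq.2))
    · rw [norm_zero]; positivity
end

section
/- Let λ₀ ∈ ℤ_p be a unit (λ₀ ∈ ℤ_p^×) and let ℓ be a positive integer. Keep λ as a variable, so that each I^ℓ_i(z,λ) is a polynomial in z and λ over ℤ_p. Then for each i ∈ {1,…,2g+1}, the dynamical equation holds modulo p^s: 2λ₀·(∂I^ℓ_i/∂λ)(z,λ₀) ≡ 2pλ₀·z_i·I^ℓ_i(z,λ₀) + Σ_{j=1}^{2g+1} I^ℓ_j(z,λ₀) (mod p^s) as polynomials in z over ℤ_p, where ∂I^ℓ_i/∂λ denotes the formal partial derivative with respect to λ, evaluated at λ = λ₀. -/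
open MvPolynomial

/-- The truncation order `d(s) = ⌊s(p−1)/(p−2)⌋ + 1`. -/
def dTrunc (p s : ℕ) : ℕ := s * (p - 1) / (p - 2) + 1

/-- The ring `ℚ_p[z₁,…,z_{2g+1}]` of polynomials in `z`. -/
abbrev Zring (p : ℕ) [Fact p.Prime] (g : ℕ) := MvPolynomial (Fin (2 * g + 1)) ℚ_[p]

/-- `E_s(pλt)` as a polynomial in `t` over `ℚ_p[z][λ]`, with `λ` kept as a variable
(the variable of the inner `Polynomial`). -/
noncomputable def EsLam (p : ℕ) [Fact p.Prime] (s g : ℕ) :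
    Polynomial (Polynomial (Zring p g)) :=
  ∑ k ∈ Finset.range (dTrunc p s + 1),
    Polynomial.C (Polynomial.C (MvPolynomial.C ((p : ℚ_[p]) ^ k / (k.factorial : ℚ_[p]))) *
        Polynomial.X ^ k) *
      Polynomial.X ^ k

/-- The `i`-th component `Ψ_{s,i}(t,z,λ) = E_s(pλt)·Φ_s^o(t,z)/(t−z_i)`, where
`Φ_s^o(t,z) = ∏_{j=1}^{2g+1}(t−z_j)^{(p^s−1)/2}`, as a polynomial in `t` over `ℚ_p[z][λ]`. -/
noncomputable def PsiCompLam (p : ℕ) [Fact p.Prime] (s g : ℕ) (i : Fin (2 * g + 1)) :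
    Polynomial (Polynomial (Zring p g)) :=
  EsLam p s g *
    (Polynomial.X - Polynomial.C (Polynomial.C (X i))) ^ ((p ^ s - 1) / 2 - 1) *
    ∏ j ∈ Finset.univ.erase i,
      (Polynomial.X - Polynomial.C (Polynomial.C (X j))) ^ ((p ^ s - 1) / 2)

/-- `I^ℓ_i(z,λ)`: the coefficient of `t^{ℓp^s−1}` in `Ψ_{s,i}(t,z,λ)`, a polynomial in
`λ` over `ℚ_p[z]`. -/
noncomputable def IsolLam (p : ℕ) [Fact p.Prime] (s g l : ℕ) (i : Fin (2 * g + 1)) :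
    Polynomial (Zring p g) :=
  (PsiCompLam p s g i).coeff (l * p ^ s - 1)

namespace DynAux

lemma derivative_finset_prod {ι R : Type*} [DecidableEq ι] [CommRing R]
    (t : Finset ι) (f : ι → Polynomial R) :
    Polynomial.derivative (∏ j ∈ t, f j) =
      ∑ j ∈ t, (∏ a ∈ t.erase j, f a) * Polynomial.derivative (f j) := by
  induction t using Finset.induction_on with
  | empty => simp
  | @insert a t ha ih =>
    have hc : ∀ j ∈ t, (∏ a' ∈ (insert a t).erase j, f a') * Polynomial.derivative (f j)
        = f a * ((∏ a' ∈ t.erase j, f a') * Polynomial.derivative (f j)) := by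
      intro j hj
      rw [Finset.erase_insert_of_ne (by rintro rfl; exact ha hj),
        Finset.prod_insert (fun h => ha (Finset.mem_of_mem_erase h))]
      ring
    rw [Finset.prod_insert ha, Polynomial.derivative_mul, ih, Finset.sum_insert ha,
      Finset.erase_insert ha, Finset.sum_congr rfl hc, ← Finset.mul_sum]
    ring

variable (p : ℕ) [hp : Fact p.Prime] (s g : ℕ)

noncomputable def dm : ℕ := (p ^ s - 1) / 2

noncomputable def Phi : Polynomial (Zring p g) :=
  ∏ j, (Polynomial.X - Polynomial.C (MvPolynomial.X j)) ^ dm p s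

noncomputable def Ai (i : Fin (2 * g + 1)) : Polynomial (Zring p g) :=
  (Polynomial.X - Polynomial.C (MvPolynomial.X i)) ^ (dm p s - 1) *
    ∏ j ∈ Finset.univ.erase i, (Polynomial.X - Polynomial.C (MvPolynomial.X j)) ^ dm p s

noncomputable def dN (l : ℕ) : ℕ := l * p ^ s - 1

noncomputable def bb (l : ℕ) (i : Fin (2 * g + 1)) (k : ℕ) : Zring p g :=
  if k ≤ dN p s l then (Ai p s g i).coeff (dN p s l - k) else 0

noncomputable def ph (l k : ℕ) : Zring p g :=
  if k ≤ dN p s l + 1 then (Phi p s g).coeff (dN p s l + 1 - k) else 0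

noncomputable def ee (k : ℕ) : ℚ_[p] := (p : ℚ_[p]) ^ k / (k.factorial : ℚ_[p])

noncomputable def uu (lam0 : ℤ_[p]) (k : ℕ) : Zring p g :=
  MvPolynomial.C (ee p k) * (MvPolynomial.C ((lam0 : ℚ_[p]))) ^ k

lemma phiA (hm : 1 ≤ dm p s) (i : Fin (2 * g + 1)) :
    (Polynomial.X - Polynomial.C (MvPolynomial.X i)) * Ai p s g i = Phi p s g := by
  rw [Ai, Phi, ← mul_assoc, ← pow_succ', Nat.sub_add_cancel hm,
    ← Finset.mul_prod_erase Finset.univ _ (Finset.mem_univ i)]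

lemma derivPhi :
    Polynomial.derivative (Phi p s g) =
      Polynomial.C (MvPolynomial.C ((dm p s : ℚ_[p]))) * ∑ j, Ai p s g j := by
  rw [Phi, derivative_finset_prod, Finset.mul_sum]
  refine Finset.sum_congr rfl fun j _ => ?_
  rw [Polynomial.derivative_pow, Polynomial.derivative_X_sub_C, Ai]
  rw [show Polynomial.C (MvPolynomial.C ((dm p s : ℚ_[p]))) =
    ((dm p s : ℕ) : Polynomial (Zring p g)) by simp [map_natCast]]
  rw [Polynomial.C_eq_natCast]
  ring

lemma isol (l : ℕ) (i : Fin (2 * g + 1)) :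
    IsolLam p s g l i =
      ∑ k ∈ Finset.range (dTrunc p s + 1),
        Polynomial.C (MvPolynomial.C (ee p k) * bb p s g l i k) * Polynomial.X ^ k := by
  have hA : ((Polynomial.X - Polynomial.C (Polynomial.C (MvPolynomial.X i))) ^ ((p ^ s - 1) / 2 - 1) *
      ∏ j ∈ Finset.univ.erase i,
        (Polynomial.X - Polynomial.C (Polynomial.C (MvPolynomial.X j))) ^ ((p ^ s - 1) / 2)
      : Polynomial (Polynomial (Zring p g)))
      = (Ai p s g i).map Polynomial.C := by
    simp [Ai, dm, Polynomial.map_mul, Polynomial.map_prod, Polynomial.map_pow,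
      Polynomial.map_sub, Polynomial.map_X, Polynomial.map_C]
  rw [IsolLam, PsiCompLam, mul_assoc, hA, EsLam, Finset.sum_mul, Polynomial.finset_sum_coeff]
  refine Finset.sum_congr rfl fun k hk => ?_
  rw [show Polynomial.C (Polynomial.C (MvPolynomial.C ((p : ℚ_[p]) ^ k / (k.factorial : ℚ_[p]))) *
        Polynomial.X ^ k) * Polynomial.X ^ k * ((Ai p s g i).map Polynomial.C)
      = Polynomial.C (Polynomial.C (MvPolynomial.C (ee p k)) * Polynomial.X ^ k) *
        (((Ai p s g i).map Polynomial.C) * Polynomial.X ^ k) from by rw [ee]; ring]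
  rw [Polynomial.coeff_C_mul, Polynomial.coeff_mul_X_pow']
  by_cases hkN : k ≤ dN p s l
  · rw [if_pos (show k ≤ l * p ^ s - 1 from hkN), Polynomial.coeff_map, bb, if_pos hkN,
      map_mul]
    show _ = Polynomial.C (MvPolynomial.C (ee p k)) *
      Polynomial.C ((Ai p s g i).coeff (dN p s l - k)) * Polynomial.X ^ k
    rw [show l * p ^ s - 1 - k = dN p s l - k from rfl]
    ring
  · rw [if_neg (show ¬ k ≤ l * p ^ s - 1 from hkN), bb, if_neg hkN]
    simp

lemma K1 (l : ℕ) (i : Fin (2 * g + 1)) (k : ℕ) (hm : 1 ≤ dm p s) :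
    bb p s g l i (k+1) - MvPolynomial.X i * bb p s g l i k = ph p s g l (k+1) := by
  have hc : ∀ n : ℕ, (Phi p s g).coeff (n+1)
      = (Ai p s g i).coeff n - MvPolynomial.X i * (Ai p s g i).coeff (n+1) := by
    intro n
    rw [← phiA p s g hm i, sub_mul, Polynomial.coeff_sub, Polynomial.coeff_X_mul,
      Polynomial.coeff_C_mul]
  have hc0 : (Phi p s g).coeff 0 = - (MvPolynomial.X i * (Ai p s g i).coeff 0) := by
    rw [← phiA p s g hm i, sub_mul, Polynomial.coeff_sub, Polynomial.mul_coeff_zero,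
      Polynomial.coeff_X_zero, Polynomial.coeff_C_mul, zero_mul, zero_sub]
  rw [bb, bb, ph]
  by_cases h1 : k + 1 ≤ dN p s l
  · rw [if_pos h1, if_pos (le_trans (Nat.le_succ k) h1), if_pos (by omega)]
    have e1 : dN p s l + 1 - (k+1) = (dN p s l - (k+1)) + 1 := by omega
    have e2 : dN p s l - k = (dN p s l - (k+1)) + 1 := by omega
    rw [e1, e2, hc]
  · by_cases h2 : k ≤ dN p s l
    · rw [if_neg h1, if_pos h2, if_pos (by omega)]
      have e1 : dN p s l + 1 - (k+1) = 0 := by omega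
      have e2 : dN p s l - k = 0 := by omega
      rw [e1, e2, hc0, zero_sub]
    · rw [if_neg h1, if_neg h2, if_neg (by omega)]
      simp

lemma K2 (l k : ℕ) :
    MvPolynomial.C ((dm p s : ℚ_[p])) * ∑ j, bb p s g l j k
      = MvPolynomial.C (((dN p s l + 1 - k : ℕ) : ℚ_[p])) * ph p s g l k := by
  have hD : ∀ n : ℕ, (Phi p s g).coeff (n+1) * ((n+1 : ℕ) : Zring p g)
      = MvPolynomial.C ((dm p s : ℚ_[p])) * ∑ j, (Ai p s g j).coeff n := by
    intro n
    have h := congrArg (fun q => Polynomial.coeff q n) (derivPhi p s g)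
    simpa [Polynomial.coeff_derivative, Polynomial.coeff_C_mul,
      Polynomial.finset_sum_coeff] using h
  by_cases hk : k ≤ dN p s l
  · rw [ph, if_pos (by omega)]
    have e1 : dN p s l + 1 - k = (dN p s l - k) + 1 := by omega
    rw [e1, show (∑ j, bb p s g l j k) = ∑ j, (Ai p s g j).coeff (dN p s l - k) from
      Finset.sum_congr rfl (fun j _ => by rw [bb, if_pos hk]), ← hD,
      show (MvPolynomial.C (((dN p s l - k + 1 : ℕ)) : ℚ_[p]))
        = (((dN p s l - k + 1 : ℕ)) : Zring p g) from map_natCast _ _]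
    ring
  · rw [ph]
    have hz : (∑ j, bb p s g l j k) = 0 :=
      Finset.sum_eq_zero (fun j _ => by rw [bb, if_neg hk])
    by_cases hk2 : k ≤ dN p s l + 1
    · have e0 : dN p s l + 1 - k = 0 := by omega
      rw [e0, hz, if_pos hk2]
      simp
    · rw [if_neg hk2, hz, mul_zero, mul_zero]

noncomputable def Tr : Subring (Zring p g) :=
  (MvPolynomial.map (PadicInt.Coe.ringHom (p := p))).range

lemma norm_coeff_le_one {x : Zring p g} (hx : x ∈ Tr p g) (mon : Fin (2 * g + 1) →₀ ℕ) :
    ‖MvPolynomial.coeff mon x‖ ≤ 1 := by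
  obtain ⟨y, rfl⟩ := hx
  rw [MvPolynomial.coeff_map]
  exact le_trans (le_of_eq (PadicInt.padic_norm_e_of_padicInt _)) (PadicInt.norm_le_one _)

lemma C_mem {x : ℚ_[p]} (hx : ‖x‖ ≤ 1) : MvPolynomial.C x ∈ Tr p g :=
  ⟨MvPolynomial.C (⟨x, hx⟩ : ℤ_[p]), by exact (MvPolynomial.map_C _ _).trans rfl⟩

lemma Cnat_mem (n : ℕ) : MvPolynomial.C ((n : ℚ_[p])) ∈ Tr p g := by
  rw [map_natCast]
  exact natCast_mem _ n

lemma coeff_mem_of_poly {q : Polynomial (Zring p g)}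
    (hq : q ∈ (Polynomial.mapRingHom
      (MvPolynomial.map (PadicInt.Coe.ringHom (p := p)))).range) (n : ℕ) :
    q.coeff n ∈ Tr p g := by
  obtain ⟨y, rfl⟩ := hq
  rw [Polynomial.coe_mapRingHom, Polynomial.coeff_map]
  exact ⟨y.coeff n, rfl⟩

lemma factor_mem_range (j : Fin (2 * g + 1)) (m : ℕ) :
    (Polynomial.X - Polynomial.C (MvPolynomial.X j)) ^ m
      ∈ (Polynomial.mapRingHom
        (MvPolynomial.map (PadicInt.Coe.ringHom (p := p)))).range := by
  refine pow_mem (RingHom.mem_range.mpr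
    ⟨Polynomial.X - Polynomial.C (MvPolynomial.X j), ?_⟩) m
  simp [Polynomial.coe_mapRingHom]

lemma ph_mem (l k : ℕ) : ph p s g l k ∈ Tr p g := by
  rw [ph]
  split
  · exact coeff_mem_of_poly p g
      (prod_mem (fun j _ => factor_mem_range p g j (dm p s))) _
  · exact zero_mem _

lemma bb_mem (l : ℕ) (i : Fin (2 * g + 1)) (k : ℕ) : bb p s g l i k ∈ Tr p g := by
  rw [bb]
  split
  · exact coeff_mem_of_poly p g
      (mul_mem (factor_mem_range p g i (dm p s - 1))
        (prod_mem (fun j _ => factor_mem_range p g j (dm p s)))) _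
  · exact zero_mem _

lemma val_fact_le (k : ℕ) : padicValNat p (k.factorial) ≤ k := by
  have h := sub_one_mul_padicValNat_factorial (p := p) k
  have h2 : 2 ≤ p := hp.out.two_le
  have h3 : padicValNat p (k.factorial) ≤ (p - 1) * padicValNat p (k.factorial) :=
    Nat.le_mul_of_pos_left _ (by omega)
  omega

lemma norm_pk_div_fact (a b c : ℕ) (h : padicValNat p (b.factorial) + c ≤ a) :
    ‖(p : ℚ_[p]) ^ a / (b.factorial : ℚ_[p])‖ ≤ (p : ℝ) ^ (-(c : ℤ)) := by
  have hp1 : (1 : ℝ) < p := by exact_mod_cast hp.out.one_lt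
  have hb0 : ((b.factorial : ℚ_[p])) ≠ 0 := Nat.cast_ne_zero.mpr b.factorial_ne_zero
  rw [norm_div, Padic.norm_p_pow, Padic.norm_eq_zpow_neg_valuation hb0, Padic.valuation_natCast,
    ← zpow_sub₀ (by positivity : (p : ℝ) ≠ 0)]
  apply zpow_le_zpow_right₀ hp1.le
  omega

lemma norm_ee_le_one (k : ℕ) : ‖ee p k‖ ≤ 1 := by
  have h := norm_pk_div_fact p k k 0 (by simpa using val_fact_le p k)
  simpa [ee] using h

lemma val_dtrunc (hp3 : 3 ≤ p) :
    padicValNat p ((dTrunc p s).factorial) + s ≤ dTrunc p s + 1 := by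
  set v := padicValNat p ((dTrunc p s).factorial) with hv
  set d := dTrunc p s with hd
  have h1 : (p - 1) * v ≤ d := by
    rw [hv, sub_one_mul_padicValNat_factorial]
    exact Nat.sub_le _ _
  have h2 : s * (p - 1) < d * (p - 2) := by
    have hlt : s * (p - 1) / (p - 2) < d := by rw [hd, dTrunc]; omega
    exact (Nat.div_lt_iff_lt_mul (by omega : 0 < p - 2)).mp hlt
  set q := p - 2 with hq
  have hq1 : 1 ≤ q := by omega
  have hpq : p - 1 = q + 1 := by omega
  rw [hpq] at h1 h2
  nlinarith [h1, h2, hq1]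

lemma pe_succ (k : ℕ) : (p : ℚ_[p]) * ee p k = ((k + 1 : ℕ) : ℚ_[p]) * ee p (k + 1) := by
  have h2 : (((k + 1) : ℕ) : ℚ_[p]) ≠ 0 := Nat.cast_ne_zero.mpr (Nat.succ_ne_zero k)
  rw [ee, ee, Nat.factorial_succ, Nat.cast_mul]
  calc (p : ℚ_[p]) * ((p : ℚ_[p]) ^ k / (k.factorial : ℚ_[p]))
      = ((p : ℚ_[p]) ^ k * p) / (k.factorial : ℚ_[p]) := by ring
    _ = (((k + 1 : ℕ) : ℚ_[p]) * ((p : ℚ_[p]) ^ k * p))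
          / (((k + 1 : ℕ) : ℚ_[p]) * (k.factorial : ℚ_[p])) :=
        (mul_div_mul_left _ _ h2).symm
    _ = ((k + 1 : ℕ) : ℚ_[p]) * ((p : ℚ_[p]) ^ (k + 1)
          / (((k + 1 : ℕ) : ℚ_[p]) * (k.factorial : ℚ_[p]))) := by
        rw [mul_div_assoc, pow_succ]

lemma e_top (d : ℕ) : ((d + 1 : ℕ) : ℚ_[p]) * ee p (d + 1)
    = (p : ℚ_[p]) ^ (d + 1) / (d.factorial : ℚ_[p]) := by
  have h2 : (((d + 1) : ℕ) : ℚ_[p]) ≠ 0 := Nat.cast_ne_zero.mpr (Nat.succ_ne_zero d)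
  rw [ee, Nat.factorial_succ, Nat.cast_mul, ← mul_div_assoc, mul_div_mul_left _ _ h2]

lemma evalI (lam0 : ℤ_[p]) (l : ℕ) (j : Fin (2 * g + 1)) :
    Polynomial.eval (MvPolynomial.C ((lam0 : ℚ_[p]))) (IsolLam p s g l j)
      = ∑ k ∈ Finset.range (dTrunc p s + 1), uu p g lam0 k * bb p s g l j k := by
  rw [isol, Polynomial.eval_finset_sum]
  refine Finset.sum_congr rfl fun k _ => ?_
  rw [Polynomial.eval_mul, Polynomial.eval_C, Polynomial.eval_pow, Polynomial.eval_X, uu]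
  ring

lemma evalD (lam0 : ℤ_[p]) (l : ℕ) (i : Fin (2 * g + 1)) :
    MvPolynomial.C (2 * (lam0 : ℚ_[p])) *
      Polynomial.eval (MvPolynomial.C ((lam0 : ℚ_[p])))
        (Polynomial.derivative (IsolLam p s g l i))
      = ∑ k ∈ Finset.range (dTrunc p s + 1),
          MvPolynomial.C (2 * ((k : ℕ) : ℚ_[p])) * (uu p g lam0 k * bb p s g l i k) := by
  rw [isol, Polynomial.derivative_sum, Polynomial.eval_finset_sum, Finset.mul_sum]
  refine Finset.sum_congr rfl fun k _ => ?_
  rw [Polynomial.derivative_C_mul_X_pow, Polynomial.eval_mul, Polynomial.eval_C,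
    Polynomial.eval_pow, Polynomial.eval_X]
  cases k with
  | zero => simp
  | succ k' =>
    rw [Nat.add_sub_cancel, uu]
    rw [show (((k' + 1 : ℕ)) : Zring p g) = MvPolynomial.C ((((k' + 1 : ℕ)) : ℚ_[p])) from
      (map_natCast _ _).symm]
    simp only [map_mul]
    ring

lemma evalT1 (lam0 : ℤ_[p]) (l : ℕ) (i : Fin (2 * g + 1)) :
    MvPolynomial.C (2 * (p : ℚ_[p]) * (lam0 : ℚ_[p])) * MvPolynomial.X i *
      Polynomial.eval (MvPolynomial.C ((lam0 : ℚ_[p]))) (IsolLam p s g l i)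
      = ∑ k ∈ Finset.range (dTrunc p s + 1),
          MvPolynomial.C (2 * ((k + 1 : ℕ) : ℚ_[p])) *
            (uu p g lam0 (k + 1) * (MvPolynomial.X i * bb p s g l i k)) := by
  rw [evalI, Finset.mul_sum]
  refine Finset.sum_congr rfl fun k _ => ?_
  have he' : MvPolynomial.C ((p : ℚ_[p])) * MvPolynomial.C (ee p k)
      = MvPolynomial.C (((k + 1 : ℕ) : ℚ_[p])) * MvPolynomial.C (ee p (k + 1))
      (σ := Fin (2 * g + 1)) := by
    rw [← map_mul, ← map_mul, pe_succ]
  rw [uu, uu]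
  simp only [map_mul]
  linear_combination (MvPolynomial.C (2 : ℚ_[p]) *
    MvPolynomial.C ((lam0 : ℚ_[p])) * (MvPolynomial.C ((lam0 : ℚ_[p]))) ^ k *
    MvPolynomial.X i * bb p s g l i k) * he'

lemma main_eq (lam0 : ℤ_[p]) (l : ℕ) (i : Fin (2 * g + 1))
    (hm : 1 ≤ dm p s) (h2m : 2 * dm p s = p ^ s - 1) (hps1 : 1 ≤ p ^ s)
    (hN1 : dN p s l + 1 = l * p ^ s) :
    (∑ k ∈ Finset.range (dTrunc p s + 1),
        MvPolynomial.C (2 * ((k : ℕ) : ℚ_[p])) * (uu p g lam0 k * bb p s g l i k))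
      - ((∑ k ∈ Finset.range (dTrunc p s + 1),
            MvPolynomial.C (2 * ((k + 1 : ℕ) : ℚ_[p])) *
              (uu p g lam0 (k + 1) * (MvPolynomial.X i * bb p s g l i k)))
          + ∑ k ∈ Finset.range (dTrunc p s + 1), uu p g lam0 k * (∑ j, bb p s g l j k))
    = MvPolynomial.C ((p : ℚ_[p]) ^ s) *
        (∑ k ∈ Finset.range (dTrunc p s + 1),
          (MvPolynomial.C (((2 * l : ℕ) : ℚ_[p])) * (uu p g lam0 k * ph p s g l k)
            - uu p g lam0 k * (∑ j, bb p s g l j k)))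
      + MvPolynomial.C ((p : ℚ_[p]) ^ (dTrunc p s + 1) / ((dTrunc p s).factorial : ℚ_[p])) *
        (MvPolynomial.C (2 : ℚ_[p]) *
          ((MvPolynomial.C ((lam0 : ℚ_[p]))) ^ (dTrunc p s + 1) *
            (ph p s g l (dTrunc p s + 1) - bb p s g l i (dTrunc p s + 1)))) := by
  set d := dTrunc p s with hd
  have E1 : (∑ k ∈ Finset.range (d + 1),
        MvPolynomial.C (2 * ((k + 1 : ℕ) : ℚ_[p])) *
          (uu p g lam0 (k + 1) * (MvPolynomial.X i * bb p s g l i k)))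
      = (∑ k ∈ Finset.range (d + 1),
          MvPolynomial.C (2 * ((k + 1 : ℕ) : ℚ_[p])) *
            (uu p g lam0 (k + 1) * bb p s g l i (k + 1)))
        - (∑ k ∈ Finset.range (d + 1),
          MvPolynomial.C (2 * ((k + 1 : ℕ) : ℚ_[p])) *
            (uu p g lam0 (k + 1) * ph p s g l (k + 1))) := by
    rw [← Finset.sum_sub_distrib]
    refine Finset.sum_congr rfl fun k _ => ?_
    have hk1 := K1 p s g l i k hm
    have hXb : MvPolynomial.X i * bb p s g l i k
        = bb p s g l i (k + 1) - ph p s g l (k + 1) := by linear_combination -hk1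
    rw [hXb]; ring
  have E2 : (∑ k ∈ Finset.range (d + 1),
        MvPolynomial.C (2 * ((k : ℕ) : ℚ_[p])) * (uu p g lam0 k * bb p s g l i k))
      - (∑ k ∈ Finset.range (d + 1),
        MvPolynomial.C (2 * ((k + 1 : ℕ) : ℚ_[p])) *
          (uu p g lam0 (k + 1) * bb p s g l i (k + 1)))
      = MvPolynomial.C (2 * ((0 : ℕ) : ℚ_[p])) * (uu p g lam0 0 * bb p s g l i 0)
        - MvPolynomial.C (2 * ((d + 1 : ℕ) : ℚ_[p])) *
            (uu p g lam0 (d + 1) * bb p s g l i (d + 1)) := by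
    rw [← Finset.sum_sub_distrib]
    exact Finset.sum_range_sub'
      (fun k => MvPolynomial.C (2 * ((k : ℕ) : ℚ_[p])) * (uu p g lam0 k * bb p s g l i k))
      (d + 1)
  have E3 : (∑ k ∈ Finset.range (d + 2),
        MvPolynomial.C (2 * ((k : ℕ) : ℚ_[p])) * (uu p g lam0 k * ph p s g l k))
      = (∑ k ∈ Finset.range (d + 1),
          MvPolynomial.C (2 * ((k + 1 : ℕ) : ℚ_[p])) *
            (uu p g lam0 (k + 1) * ph p s g l (k + 1)))
        + MvPolynomial.C (2 * ((0 : ℕ) : ℚ_[p])) * (uu p g lam0 0 * ph p s g l 0) :=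
    Finset.sum_range_succ'
      (fun k => MvPolynomial.C (2 * ((k : ℕ) : ℚ_[p])) * (uu p g lam0 k * ph p s g l k))
      (d + 1)
  have E4 : (∑ k ∈ Finset.range (d + 2),
        MvPolynomial.C (2 * ((k : ℕ) : ℚ_[p])) * (uu p g lam0 k * ph p s g l k))
      = (∑ k ∈ Finset.range (d + 1),
          MvPolynomial.C (2 * ((k : ℕ) : ℚ_[p])) * (uu p g lam0 k * ph p s g l k))
        + MvPolynomial.C (2 * ((d + 1 : ℕ) : ℚ_[p])) *
            (uu p g lam0 (d + 1) * ph p s g l (d + 1)) :=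
    Finset.sum_range_succ
      (fun k => MvPolynomial.C (2 * ((k : ℕ) : ℚ_[p])) * (uu p g lam0 k * ph p s g l k))
      (d + 1)
  have E5 : (∑ k ∈ Finset.range (d + 1), uu p g lam0 k * (∑ j, bb p s g l j k))
      = MvPolynomial.C ((p : ℚ_[p]) ^ s) *
          (∑ k ∈ Finset.range (d + 1), uu p g lam0 k * (∑ j, bb p s g l j k))
        - (∑ k ∈ Finset.range (d + 1),
          MvPolynomial.C (2 * ((dN p s l + 1 - k : ℕ) : ℚ_[p])) *
            (uu p g lam0 k * ph p s g l k)) := by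
    rw [Finset.mul_sum, ← Finset.sum_sub_distrib]
    refine Finset.sum_congr rfl fun k _ => ?_
    have h2 := K2 p s g l k
    have hone : MvPolynomial.C ((p : ℚ_[p]) ^ s)
        - MvPolynomial.C ((((2 * dm p s : ℕ)) : ℚ_[p]))
        = (1 : Zring p g) := by
      have hc : ((((2 * dm p s : ℕ))) : ℚ_[p]) = (p : ℚ_[p]) ^ s - 1 := by
        rw [h2m, Nat.cast_sub hps1]
        push_cast
        ring
      rw [hc, ← map_sub, show ((p : ℚ_[p]) ^ s - ((p : ℚ_[p]) ^ s - 1)) = 1 from by ring,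
        map_one]
    have hsplit : MvPolynomial.C ((((2 * dm p s : ℕ)) : ℚ_[p])) *
          (uu p g lam0 k * ∑ j, bb p s g l j k)
        = MvPolynomial.C (2 * ((dN p s l + 1 - k : ℕ) : ℚ_[p])) *
            (uu p g lam0 k * ph p s g l k) := by
      have hCm : MvPolynomial.C ((((2 * dm p s : ℕ)) : ℚ_[p]))
          = MvPolynomial.C ((2 : ℚ_[p])) * MvPolynomial.C ((dm p s : ℚ_[p]))
          (σ := Fin (2 * g + 1)) := by
        rw [← map_mul]; congr 1; push_cast; ring
      rw [hCm, map_mul]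
      linear_combination (MvPolynomial.C ((2 : ℚ_[p])) * uu p g lam0 k) * h2
    linear_combination (-(uu p g lam0 k * ∑ j, bb p s g l j k)) * hone - hsplit
  have E6 : (∑ k ∈ Finset.range (d + 1),
        MvPolynomial.C (2 * ((k : ℕ) : ℚ_[p])) * (uu p g lam0 k * ph p s g l k))
      + (∑ k ∈ Finset.range (d + 1),
        MvPolynomial.C (2 * ((dN p s l + 1 - k : ℕ) : ℚ_[p])) *
          (uu p g lam0 k * ph p s g l k))
      = ∑ k ∈ Finset.range (d + 1),
          MvPolynomial.C ((p : ℚ_[p]) ^ s) *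
            (MvPolynomial.C (((2 * l : ℕ) : ℚ_[p])) * (uu p g lam0 k * ph p s g l k)) := by
    rw [← Finset.sum_add_distrib]
    refine Finset.sum_congr rfl fun k _ => ?_
    by_cases hk : k ≤ dN p s l + 1
    · have hnat : k + (dN p s l + 1 - k) = l * p ^ s := by omega
      have hcast : 2 * ((k : ℕ) : ℚ_[p]) + 2 * ((dN p s l + 1 - k : ℕ) : ℚ_[p])
          = (p : ℚ_[p]) ^ s * (((2 * l : ℕ)) : ℚ_[p]) := by
        have hq := congrArg (fun n : ℕ => ((n : ℚ_[p]))) hnat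
        push_cast at hq
        push_cast
        linear_combination 2 * hq
      calc MvPolynomial.C (2 * ((k : ℕ) : ℚ_[p])) * (uu p g lam0 k * ph p s g l k)
            + MvPolynomial.C (2 * ((dN p s l + 1 - k : ℕ) : ℚ_[p])) *
                (uu p g lam0 k * ph p s g l k)
          = MvPolynomial.C (2 * ((k : ℕ) : ℚ_[p])
              + 2 * ((dN p s l + 1 - k : ℕ) : ℚ_[p])) * (uu p g lam0 k * ph p s g l k) := by
            rw [map_add]; ring
        _ = MvPolynomial.C ((p : ℚ_[p]) ^ s * (((2 * l : ℕ)) : ℚ_[p])) *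
              (uu p g lam0 k * ph p s g l k) := by rw [hcast]
        _ = MvPolynomial.C ((p : ℚ_[p]) ^ s) *
              (MvPolynomial.C (((2 * l : ℕ) : ℚ_[p])) * (uu p g lam0 k * ph p s g l k)) := by
            rw [map_mul]; ring
    · have hP : ph p s g l k = 0 := by rw [ph, if_neg hk]
      rw [hP]; ring
  have E7 : (∑ k ∈ Finset.range (d + 1),
        MvPolynomial.C ((p : ℚ_[p]) ^ s) *
          (MvPolynomial.C (((2 * l : ℕ) : ℚ_[p])) * (uu p g lam0 k * ph p s g l k)))
      = MvPolynomial.C ((p : ℚ_[p]) ^ s) *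
          ∑ k ∈ Finset.range (d + 1),
            MvPolynomial.C (((2 * l : ℕ) : ℚ_[p])) * (uu p g lam0 k * ph p s g l k) :=
    (Finset.mul_sum _ _ _).symm
  have E8 : (∑ k ∈ Finset.range (d + 1),
        (MvPolynomial.C (((2 * l : ℕ) : ℚ_[p])) * (uu p g lam0 k * ph p s g l k)
          - uu p g lam0 k * (∑ j, bb p s g l j k)))
      = (∑ k ∈ Finset.range (d + 1),
          MvPolynomial.C (((2 * l : ℕ) : ℚ_[p])) * (uu p g lam0 k * ph p s g l k))
        - ∑ k ∈ Finset.range (d + 1), uu p g lam0 k * (∑ j, bb p s g l j k) :=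
    Finset.sum_sub_distrib _ _
  have E9 : MvPolynomial.C (2 * ((0 : ℕ) : ℚ_[p])) * (uu p g lam0 0 * bb p s g l i 0)
      = 0 := by simp
  have E10 : MvPolynomial.C (2 * ((0 : ℕ) : ℚ_[p])) * (uu p g lam0 0 * ph p s g l 0)
      = 0 := by simp
  have E11 : MvPolynomial.C (2 * ((d + 1 : ℕ) : ℚ_[p])) *
        (uu p g lam0 (d + 1) * ph p s g l (d + 1))
      - MvPolynomial.C (2 * ((d + 1 : ℕ) : ℚ_[p])) *
        (uu p g lam0 (d + 1) * bb p s g l i (d + 1))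
      = MvPolynomial.C ((p : ℚ_[p]) ^ (d + 1) / ((d.factorial) : ℚ_[p])) *
          (MvPolynomial.C ((2 : ℚ_[p])) *
            ((MvPolynomial.C ((lam0 : ℚ_[p]))) ^ (d + 1) *
              (ph p s g l (d + 1) - bb p s g l i (d + 1)))) := by
    have he : MvPolynomial.C ((((d + 1 : ℕ)) : ℚ_[p])) * MvPolynomial.C (ee p (d + 1))
        = MvPolynomial.C ((p : ℚ_[p]) ^ (d + 1) / ((d.factorial) : ℚ_[p]))
        (σ := Fin (2 * g + 1)) := by
      rw [← map_mul, e_top]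
    rw [uu]
    simp only [map_mul]
    linear_combination (MvPolynomial.C ((2 : ℚ_[p])) *
      (MvPolynomial.C ((lam0 : ℚ_[p]))) ^ (d + 1) *
      (ph p s g l (d + 1) - bb p s g l i (d + 1))) * he
  linear_combination E2 - E1 + E4 - E3 - E5 + E6 + E7
    - MvPolynomial.C ((p : ℚ_[p]) ^ s) * E8 + E9 - E10 + E11

end DynAux


/-- Let `λ₀ ∈ ℤ_p^×` be a unit and `ℓ` a positive integer. Keeping `λ` as a
variable, each `I^ℓ_i(z,λ)` is a polynomial in `λ` over `ℚ_p[z]` (with coefficients in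
`ℤ_p`). Then for each `i`, the dynamical equation holds modulo `p^s`:
`2λ₀·(∂I^ℓ_i/∂λ)(z,λ₀) ≡ 2pλ₀·z_i·I^ℓ_i(z,λ₀) + Σ_{j=1}^{2g+1} I^ℓ_j(z,λ₀) (mod p^s)`,
i.e., every coefficient of the difference lies in `p^s ℤ_p`. Here `∂/∂λ` is the formal
derivative with respect to `λ`, evaluated at `λ = λ₀`. -/
theorem dynamical_equation_mod_ps (p : ℕ) [Fact p.Prime] (hodd : Odd p)
    (s g : ℕ) (hs : 0 < s) (hg : 0 < g) (lam0 : ℤ_[p]) (hunit : IsUnit lam0)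
    (l : ℕ) (hl : 0 < l) :
    ∀ i : Fin (2 * g + 1), ∀ mon : Fin (2 * g + 1) →₀ ℕ,
      ‖coeff mon
          (C (2 * (lam0 : ℚ_[p])) *
              Polynomial.eval (MvPolynomial.C (lam0 : ℚ_[p]))
                (Polynomial.derivative (IsolLam p s g l i)) -
            (C (2 * (p : ℚ_[p]) * (lam0 : ℚ_[p])) * X i *
                Polynomial.eval (MvPolynomial.C (lam0 : ℚ_[p])) (IsolLam p s g l i) +
              ∑ j : Fin (2 * g + 1),
                Polynomial.eval (MvPolynomial.C (lam0 : ℚ_[p])) (IsolLam p s g l j)))‖ ≤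
        (p : ℝ) ^ (-(s : ℤ)) := by
  intro i mon
  have hp3 : 3 ≤ p := by
    obtain ⟨t, ht⟩ := hodd
    have := (Fact.out : p.Prime).two_le
    omega
  have hps3 : 3 ≤ p ^ s := le_trans hp3 (Nat.le_self_pow (by omega) p)
  have hm1 : 1 ≤ DynAux.dm p s := by rw [DynAux.dm]; omega
  have h2m : 2 * DynAux.dm p s = p ^ s - 1 := by
    obtain ⟨t, ht⟩ := hodd.pow (n := s)
    rw [DynAux.dm]; omega
  have hps1 : 1 ≤ p ^ s := by omega
  have hN1 : DynAux.dN p s l + 1 = l * p ^ s := by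
    have h1 : 1 * 1 ≤ l * p ^ s := Nat.mul_le_mul (by omega) (by omega)
    rw [DynAux.dN]; omega
  have hsum : (∑ j, Polynomial.eval (MvPolynomial.C ((lam0 : ℚ_[p]))) (IsolLam p s g l j))
      = ∑ k ∈ Finset.range (dTrunc p s + 1),
          DynAux.uu p g lam0 k * (∑ j, DynAux.bb p s g l j k) := by
    calc (∑ j, Polynomial.eval (MvPolynomial.C ((lam0 : ℚ_[p]))) (IsolLam p s g l j))
        = ∑ j, ∑ k ∈ Finset.range (dTrunc p s + 1),
            DynAux.uu p g lam0 k * DynAux.bb p s g l j k :=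
          Finset.sum_congr rfl fun j _ => DynAux.evalI p s g lam0 l j
      _ = ∑ k ∈ Finset.range (dTrunc p s + 1), ∑ j,
            DynAux.uu p g lam0 k * DynAux.bb p s g l j k := Finset.sum_comm
      _ = ∑ k ∈ Finset.range (dTrunc p s + 1),
            DynAux.uu p g lam0 k * (∑ j, DynAux.bb p s g l j k) :=
          Finset.sum_congr rfl fun k _ => (Finset.mul_sum _ _ _).symm
  rw [DynAux.evalD, DynAux.evalT1, hsum,
    DynAux.main_eq p s g lam0 l i hm1 h2m hps1 hN1]
  -- membership facts
  have hlam : ‖((lam0 : ℚ_[p]))‖ ≤ 1 :=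
    le_trans (le_of_eq (PadicInt.padic_norm_e_of_padicInt _)) (PadicInt.norm_le_one _)
  have huu : ∀ k, DynAux.uu p g lam0 k ∈ DynAux.Tr p g := fun k =>
    mul_mem (DynAux.C_mem p g (DynAux.norm_ee_le_one p k))
      (pow_mem (DynAux.C_mem p g hlam) k)
  have hW1 : (∑ k ∈ Finset.range (dTrunc p s + 1),
      (MvPolynomial.C (((2 * l : ℕ) : ℚ_[p])) * (DynAux.uu p g lam0 k * DynAux.ph p s g l k)
        - DynAux.uu p g lam0 k * (∑ j, DynAux.bb p s g l j k))) ∈ DynAux.Tr p g :=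
    sum_mem fun k _ =>
      sub_mem
        (mul_mem (DynAux.Cnat_mem p g (2 * l))
          (mul_mem (huu k) (DynAux.ph_mem p s g l k)))
        (mul_mem (huu k) (sum_mem fun j _ => DynAux.bb_mem p s g l j k))
  have hC2 : MvPolynomial.C ((2 : ℚ_[p])) ∈ DynAux.Tr p g := by
    rw [show (2 : ℚ_[p]) = ((2 : ℕ) : ℚ_[p]) by norm_num]
    exact DynAux.Cnat_mem p g 2
  have hW2 : (MvPolynomial.C ((2 : ℚ_[p])) *
      ((MvPolynomial.C ((lam0 : ℚ_[p]))) ^ (dTrunc p s + 1) *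
        (DynAux.ph p s g l (dTrunc p s + 1) - DynAux.bb p s g l i (dTrunc p s + 1))))
      ∈ DynAux.Tr p g :=
    mul_mem hC2 (mul_mem (pow_mem (DynAux.C_mem p g hlam) _)
      (sub_mem (DynAux.ph_mem p s g l _) (DynAux.bb_mem p s g l i _)))
  rw [MvPolynomial.coeff_add, MvPolynomial.coeff_C_mul, MvPolynomial.coeff_C_mul]
  refine le_trans (Padic.nonarchimedean _ _) (max_le ?_ ?_)
  · rw [norm_mul, Padic.norm_p_pow]
    calc (p : ℝ) ^ (-(s : ℤ)) * ‖coeff mon _‖ ≤ (p : ℝ) ^ (-(s : ℤ)) * 1 :=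
          mul_le_mul_of_nonneg_left (DynAux.norm_coeff_le_one p g hW1 mon) (by positivity)
      _ = (p : ℝ) ^ (-(s : ℤ)) := mul_one _
  · rw [norm_mul]
    have h1 : ‖(p : ℚ_[p]) ^ (dTrunc p s + 1) / (((dTrunc p s).factorial) : ℚ_[p])‖
        ≤ (p : ℝ) ^ (-(s : ℤ)) :=
      DynAux.norm_pk_div_fact p (dTrunc p s + 1) (dTrunc p s) s (DynAux.val_dtrunc p s hp3)
    calc ‖(p : ℚ_[p]) ^ (dTrunc p s + 1) / (((dTrunc p s).factorial) : ℚ_[p])‖ *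
          ‖coeff mon _‖ ≤ (p : ℝ) ^ (-(s : ℤ)) * 1 :=
          mul_le_mul h1 (DynAux.norm_coeff_le_one p g hW2 mon) (norm_nonneg _)
            (by positivity)
      _ = (p : ℝ) ^ (-(s : ℤ)) := mul_one _
end

section
/- Let ℓ be a positive integer and consider the λ-independent term I^ℓ(z,0) = (I^ℓ_1(z,0),…,I^ℓ_{2g+1}(z,0)) obtained by setting λ = 0, so that I^ℓ_j(z,0) is the coefficient of t^{ℓp^s−1} in Φ_s^o(t,z)/(t−z_j). Then Σ_{j=1}^{2g+1} I^ℓ_j(z,0) ≡ 0 (mod p^s) as a polynomial in z over ℤ_p. -/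
open MvPolynomial

private lemma derivative_finset_prod' {ι : Type*} {R : Type*} [CommSemiring R] [DecidableEq ι]
    (s : Finset ι) (f : ι → Polynomial R) :
    Polynomial.derivative (∏ i ∈ s, f i) =
      ∑ i ∈ s, (∏ j ∈ s.erase i, f j) * Polynomial.derivative (f i) := by
  induction s using Finset.induction_on with
  | empty => simp
  | @insert a s ha ih =>
    rw [Finset.prod_insert ha, Polynomial.derivative_mul, ih, Finset.sum_insert ha,
      Finset.erase_insert ha, Finset.mul_sum]
    congr 1
    · ring
    · refine Finset.sum_congr rfl fun i hi => ?_
      rw [Finset.erase_insert_of_ne (by rintro rfl; exact ha hi),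
        Finset.prod_insert (fun h => ha (Finset.mem_of_mem_erase h))]
      ring


/-- `Φ_s^o(t,z)/(t−z_j) = (t−z_j)^{(p^s−1)/2−1}·∏_{i≠j}(t−z_i)^{(p^s−1)/2}`, where
`Φ_s^o(t,z) = ∏_{i=1}^{2g+1}(t−z_i)^{(p^s−1)/2}`, as a polynomial in `t` over
`ℤ[z₁,…,z_{2g+1}]`. -/
noncomputable def PhiODiv (p s g : ℕ) (j : Fin (2 * g + 1)) :
    Polynomial (MvPolynomial (Fin (2 * g + 1)) ℤ) :=
  (Polynomial.X - Polynomial.C (X j)) ^ ((p ^ s - 1) / 2 - 1) *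
    ∏ i ∈ Finset.univ.erase j, (Polynomial.X - Polynomial.C (X i)) ^ ((p ^ s - 1) / 2)

/-- Let `ℓ` be a positive integer and let `I^ℓ_j(z,0)` be the coefficient of
`t^{ℓp^s−1}` in `Φ_s^o(t,z)/(t−z_j)`. Then `Σ_{j=1}^{2g+1} I^ℓ_j(z,0) ≡ 0 (mod p^s)`:
every coefficient of this polynomial in `z` is divisible by `p^s`. -/
theorem sum_Isol_zero_mod_ps (p : ℕ) (hp : p.Prime) (hodd : Odd p)
    (s g : ℕ) (hs : 0 < s) (hg : 0 < g) (l : ℕ) (hl : 0 < l) :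
    ∀ mon : Fin (2 * g + 1) →₀ ℕ,
      (p : ℤ) ^ s ∣
        coeff mon (∑ j : Fin (2 * g + 1), (PhiODiv p s g j).coeff (l * p ^ s - 1)) := by
  intro mon
  set R := MvPolynomial (Fin (2 * g + 1)) ℤ
  set m : ℕ := (p ^ s - 1) / 2 with hm
  set n : ℕ := l * p ^ s - 1 with hn
  have hps1 : 1 ≤ p ^ s := Nat.one_le_pow _ _ hp.pos
  have hlps : 1 ≤ l * p ^ s := Nat.mul_pos hl (by positivity)
  have hn1 : n + 1 = l * p ^ s := by omega
  set Φ : Polynomial R := ∏ i : Fin (2 * g + 1), (Polynomial.X - Polynomial.C (X i)) ^ m with hΦ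
  have hderiv : Polynomial.derivative Φ =
      Polynomial.C (MvPolynomial.C (m : ℤ)) * ∑ j : Fin (2 * g + 1), PhiODiv p s g j := by
    rw [hΦ, derivative_finset_prod', Finset.mul_sum]
    refine Finset.sum_congr rfl fun j _ => ?_
    rw [Polynomial.derivative_pow, Polynomial.derivative_sub, Polynomial.derivative_X,
        Polynomial.derivative_C, sub_zero, mul_one, PhiODiv]
    rw [show ((m : R)) = ((MvPolynomial.C (m : ℤ) : R)) from (map_natCast MvPolynomial.C m).symm]
    ring
  have h1 : Φ.coeff (n + 1) * ((n : R) + 1)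
      = MvPolynomial.C (m : ℤ) * ∑ j : Fin (2 * g + 1), (PhiODiv p s g j).coeff n := by
    have := congrArg (fun q => Polynomial.coeff q n) hderiv
    simpa [Polynomial.coeff_derivative, Polynomial.coeff_C_mul,
      Polynomial.finset_sum_coeff] using this
  have hcast : ((n : R) + 1) = MvPolynomial.C ((n : ℤ) + 1) := by
    rw [map_add, map_one, map_natCast]
  have h2 : ((n : ℤ) + 1) * coeff mon (Φ.coeff (n + 1))
      = (m : ℤ) * coeff mon (∑ j : Fin (2 * g + 1), (PhiODiv p s g j).coeff n) := by
    have h := congrArg (coeff mon) h1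
    rw [hcast, mul_comm (Φ.coeff (n + 1)), MvPolynomial.coeff_C_mul,
      MvPolynomial.coeff_C_mul] at h
    exact h
  have hcast2 : ((n : ℤ) + 1) = (l : ℤ) * (p : ℤ) ^ s := by
    exact_mod_cast congrArg (fun k : ℕ => (k : ℤ)) hn1
  have hdvd : (p : ℤ) ^ s ∣
      (m : ℤ) * coeff mon (∑ j : Fin (2 * g + 1), (PhiODiv p s g j).coeff n) := by
    rw [← h2, hcast2]
    exact ⟨(l : ℤ) * coeff mon (Φ.coeff (n + 1)), by ring⟩
  have hpm : ¬ (p ∣ m) := by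
    intro hdvd'
    have heven : Even (p ^ s - 1) := Nat.Odd.sub_odd (hodd.pow) odd_one
    have h2m : 2 * m = p ^ s - 1 := by
      rw [hm, mul_comm]; exact Nat.div_two_mul_two_of_even heven
    have hdps1 : p ∣ p ^ s - 1 := by rw [← h2m]; exact Dvd.dvd.mul_left hdvd' 2
    have hps : p ∣ p ^ s := dvd_pow_self p (by omega)
    have h1' : p ∣ 1 := by
      have hd := Nat.dvd_sub hps hdps1
      rwa [show p ^ s - (p ^ s - 1) = 1 by omega] at hd
    have := Nat.le_of_dvd one_pos h1'
    have := hp.two_le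
    omega
  have hcop : IsCoprime ((p : ℤ) ^ s) ((m : ℤ)) := by
    apply IsCoprime.pow_left
    rw [Int.isCoprime_iff_gcd_eq_one, Int.gcd_natCast_natCast]
    exact (hp.coprime_iff_not_dvd).mpr hpm
  exact hcop.dvd_of_dvd_mul_left hdvd
end

section
/- Let p be an odd prime, s and r positive integers, and λ ∈ ℤ_p. Define the master polynomial Φ_{r,s}(t,z,λ) = E_{r,s}(p^r λ t)·(t−z−1)_{(p^s−1)/2}·(t−z−1)_{(p^s+1)/2} ∈ ℤ_p[t,z], and expand it in the variable t in the basis of Pochhammer polynomials: Φ_{r,s}(t,z,λ) = Σ_d c_d(z,λ)·(t)_d with c_d(z,λ) ∈ ℤ_p[z]. Set I_{r,s}(z,λ) = c_{p^s−1}(z,λ). Then I_{r,s} is a solution modulo p^s of the qKZ difference equation: E_{r,s}(p^r λ)·I_{r,s}(z−1,λ) ≡ I_{r,s}(z,λ) (mod p^s) as polynomials in z over ℤ_p, where I_{r,s}(z−1,λ) denotes the polynomial obtained by substituting z−1 for z. -/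
open Polynomial

/-- The truncation order `d(r,s) = ⌊s(p−1)/(r(p−1)−1)⌋ + 1`. -/
def dTruncR (p r s : ℕ) : ℕ := s * (p - 1) / (r * (p - 1) - 1) + 1

section Helpers

variable {p : ℕ} [hp : Fact p.Prime]

lemma sum_bd {ι : Type*} (s : Finset ι) (f : ι → ℚ_[p]) {C : ℝ} (hC : 0 ≤ C)
    (h : ∀ i ∈ s, ‖f i‖ ≤ C) : ‖∑ i ∈ s, f i‖ ≤ C :=
  IsUltrametricDist.norm_sum_le_of_forall_le_of_nonneg hC h

lemma norm_nat_le_one (n : ℕ) : ‖(n : ℚ_[p])‖ ≤ 1 := by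
  have := Padic.norm_int_le_one (p := p) (n : ℤ)
  push_cast at this
  exact this

def DB (C : ℝ) (F : Polynomial (Polynomial ℚ_[p])) : Prop :=
  ∀ m n, ‖(F.coeff m).coeff n‖ ≤ C

lemma DB_mul {α β : ℝ} (hα : 0 ≤ α) (hβ : 0 ≤ β) {F G : Polynomial (Polynomial ℚ_[p])}
    (hF : DB α F) (hG : DB β G) : DB (α * β) (F * G) := by
  intro m n
  rw [coeff_mul, finset_sum_coeff]
  refine sum_bd _ _ (mul_nonneg hα hβ) fun x _ => ?_
  rw [coeff_mul]
  refine sum_bd _ _ (mul_nonneg hα hβ) fun y _ => ?_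
  exact (norm_mul_le _ _).trans (mul_le_mul (hF _ _) (hG _ _) (norm_nonneg _) hα)

lemma DB_one : DB (p := p) 1 1 := by
  intro m n
  rcases eq_or_ne m 0 with rfl | hm
  · rcases eq_or_ne n 0 with rfl | hn
    · simp
    · simp [coeff_one, hn]
  · simp [coeff_one, hm]

lemma DB_prod {ι : Type*} (s : Finset ι) (f : ι → Polynomial (Polynomial ℚ_[p]))
    (h : ∀ i ∈ s, DB 1 (f i)) : DB 1 (∏ i ∈ s, f i) := by
  classical
  induction s using Finset.induction_on with
  | empty => simpa using DB_one
  | insert _ _ hx ih =>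
    rename_i a t
    rw [Finset.prod_insert hx]
    have := DB_mul zero_le_one zero_le_one (h a (Finset.mem_insert_self _ _))
      (ih fun i hi => h i (Finset.mem_insert_of_mem hi))
    simpa using this

lemma DB_sub {α : ℝ} {F G : Polynomial (Polynomial ℚ_[p])} (hF : DB α F) (hG : DB α G) :
    DB α (F - G) := by
  intro m n
  rw [coeff_sub, coeff_sub, sub_eq_add_neg]
  exact (IsUltrametricDist.norm_add_le_max _ _).trans
    (max_le (hF m n) (by rw [norm_neg]; exact hG m n))

lemma DB_X : DB (p := p) 1 X := by
  intro m n
  rw [coeff_X]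
  split
  · rw [coeff_one]; split <;> simp
  · simp

lemma DB_CX : DB (p := p) 1 (Polynomial.C X) := by
  intro m n
  rw [coeff_C]
  split
  · rw [coeff_X]; split <;> simp
  · simp

lemma DB_nat (k : ℕ) : DB (p := p) 1 ((k : ℕ) : Polynomial (Polynomial ℚ_[p])) := by
  intro m n
  rw [Polynomial.coeff_natCast_ite]
  split
  · rw [Polynomial.coeff_natCast_ite]
    split
    · exact norm_nat_le_one k
    · simp
  · simp

lemma DB_factor (k : ℕ) :
    DB (p := p) 1 (X - Polynomial.C X - ((k : ℕ) : Polynomial (Polynomial ℚ_[p]))) :=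
  DB_sub (DB_sub DB_X DB_CX) (DB_nat k)

lemma DB_sumCX (N : ℕ) (a : ℕ → ℚ_[p]) {C : ℝ} (hC : 0 ≤ C) (h : ∀ k, ‖a k‖ ≤ C) :
    DB C (∑ k ∈ Finset.range N, Polynomial.C (Polynomial.C (a k)) * X ^ k) := by
  intro m n
  rw [finset_sum_coeff, finset_sum_coeff]
  refine sum_bd _ _ hC fun k _ => ?_
  rw [coeff_C_mul, coeff_X_pow]
  split
  · rw [mul_one, coeff_C]
    split
    · exact h _
    · simpa using hC
  · rw [mul_zero]
    simpa using hC

lemma comp_bd (a : ℚ_[p]) (ha : ‖a‖ ≤ 1) {C : ℝ} (hC : 0 ≤ C) (f : Polynomial ℚ_[p])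
    (hf : ∀ n, ‖f.coeff n‖ ≤ C) : ∀ n, ‖(f.comp (X + Polynomial.C a)).coeff n‖ ≤ C := by
  intro n
  rw [comp, eval₂_eq_sum, Polynomial.sum, finset_sum_coeff]
  refine sum_bd _ _ hC fun e _ => ?_
  rw [coeff_C_mul, coeff_X_add_C_pow]
  calc ‖f.coeff e * (a ^ (e - n) * (e.choose n : ℚ_[p]))‖
      ≤ ‖f.coeff e‖ * (‖a ^ (e - n)‖ * ‖(e.choose n : ℚ_[p])‖) := by
        refine (norm_mul_le _ _).trans ?_
        gcongr
        exact norm_mul_le _ _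
    _ ≤ C * (1 * 1) := by
        refine mul_le_mul (hf e) ?_ (by positivity) hC
        refine mul_le_mul ?_ (norm_nat_le_one _) (norm_nonneg _) zero_le_one
        calc ‖a ^ (e - n)‖ ≤ ‖a‖ ^ (e-n) := le_of_eq (norm_pow _ _)
          _ ≤ 1 ^ (e-n) := by gcongr
          _ = 1 := one_pow _
    _ = C := by ring

lemma extract {C : ℝ} (hC : 0 ≤ C) (B : ℕ) (b : ℕ → Polynomial ℚ_[p])
    (hb : ∀ d, B ≤ d → b d = 0)
    (h : DB C (∑ d ∈ Finset.range B, Polynomial.C (b d) * descPochhammer (Polynomial ℚ_[p]) d)) :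
    ∀ d n, ‖(b d).coeff n‖ ≤ C := by
  set q : ℕ → ℕ → ℚ_[p] := fun d m => (descPochhammer ℚ_[p] d).coeff m with hq
  have hq1 : ∀ d, q d d = 1 := by
    intro d
    have hm := monic_descPochhammer ℚ_[p] d
    have := hm.coeff_natDegree
    rwa [descPochhammer_natDegree] at this
  have hq0 : ∀ d m, d < m → q d m = 0 := by
    intro d m hdm
    refine coeff_eq_zero_of_natDegree_lt ?_
    rwa [descPochhammer_natDegree]
  have hqle : ∀ d m, ‖q d m‖ ≤ 1 := by
    intro d m
    have : descPochhammer ℚ_[p] d = (descPochhammer ℤ d).map (Int.castRingHom ℚ_[p]) := by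
      rw [descPochhammer_map]
    simp only [hq, this, coeff_map, eq_intCast]
    exact Padic.norm_int_le_one _
  have hcoeff : ∀ m n, ((∑ d ∈ Finset.range B,
      Polynomial.C (b d) * descPochhammer (Polynomial ℚ_[p]) d).coeff m).coeff n
      = ∑ d ∈ Finset.range B, (b d).coeff n * q d m := by
    intro m n
    rw [finset_sum_coeff]
    have : ∀ d, (Polynomial.C (b d) * descPochhammer (Polynomial ℚ_[p]) d).coeff m
        = b d * Polynomial.C (q d m) := by
      intro d
      rw [coeff_C_mul]
      congr 1
      have : descPochhammer (Polynomial ℚ_[p]) d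
          = (descPochhammer ℚ_[p] d).map (Polynomial.C) := by rw [descPochhammer_map]
      rw [this, coeff_map]
    simp only [this]
    rw [finset_sum_coeff]
    simp only [coeff_mul_C]
  have key : ∀ j d, B - d ≤ j → ∀ n, ‖(b d).coeff n‖ ≤ C := by
    intro j
    induction j with
    | zero =>
      intro d hd n
      rw [hb d (Nat.sub_eq_zero_iff_le.mp (Nat.le_zero.mp hd))]
      simpa using hC
    | succ j ih =>
      intro d hd n
      by_cases hdB : B ≤ d
      · rw [hb d hdB]; simpa using hC
      push_neg at hdB
      have hmem : d ∈ Finset.range B := Finset.mem_range.mpr hdB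
      have hsum := hcoeff d n
      have hsplit : (b d).coeff n * q d d
          + ∑ e ∈ (Finset.range B).erase d, (b e).coeff n * q e d
          = ∑ e ∈ Finset.range B, (b e).coeff n * q e d :=
        Finset.add_sum_erase _ _ hmem
      rw [hq1 d, mul_one] at hsplit
      have hbd : (b d).coeff n = ((∑ d ∈ Finset.range B,
          Polynomial.C (b d) * descPochhammer (Polynomial ℚ_[p]) d).coeff d).coeff n
          - ∑ e ∈ (Finset.range B).erase d, (b e).coeff n * q e d := by
        rw [hsum, ← hsplit]; ring
      rw [hbd, sub_eq_add_neg]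
      refine (IsUltrametricDist.norm_add_le_max _ _).trans (max_le (h d n) ?_)
      rw [norm_neg]
      refine sum_bd _ _ hC fun e he => ?_
      rcases Finset.mem_erase.mp he with ⟨hne, heB⟩
      rcases lt_or_gt_of_ne hne with hlt | hgt
      · rw [hq0 e d hlt, mul_zero]; simpa using hC
      · have hBe : B - e ≤ j := by omega
        calc ‖(b e).coeff n * q e d‖ ≤ ‖(b e).coeff n‖ * ‖q e d‖ := norm_mul_le _ _
          _ ≤ C * 1 := mul_le_mul (ih e hBe n) (hqle _ _) (norm_nonneg _) hC
          _ = C := mul_one C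
  intro d n
  exact key (B - d) d le_rfl n

lemma legendre_bd (n : ℕ) : (p - 1) * padicValNat p n.factorial ≤ n := by
  have := sub_one_mul_padicValNat_factorial (p := p) n
  omega

lemma norm_fact (n : ℕ) : ‖((n.factorial : ℕ) : ℚ_[p])‖ = (p:ℝ) ^ (-(padicValNat p n.factorial : ℤ)) := by
  rw [Padic.norm_eq_zpow_neg_valuation, Padic.valuation_natCast]
  exact_mod_cast Nat.cast_ne_zero.mpr n.factorial_ne_zero

lemma norm_e (r : ℕ) (lam : ℤ_[p]) (k : ℕ) :
    ‖(p : ℚ_[p]) ^ (r * k) * (lam : ℚ_[p]) ^ k / (k.factorial : ℚ_[p])‖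
      ≤ (p:ℝ) ^ ((padicValNat p k.factorial : ℤ) - (r * k : ℕ)) := by
  have hp1 : (1:ℝ) < p := by exact_mod_cast hp.out.one_lt
  rw [norm_div, norm_mul, Padic.norm_p_pow, norm_pow, PadicInt.padic_norm_e_of_padicInt, norm_fact]
  rw [div_eq_mul_inv, ← zpow_neg, neg_neg]
  have h1 : ‖lam‖ ^ k ≤ 1 := pow_le_one₀ (norm_nonneg _) lam.norm_le_one
  calc (p:ℝ) ^ (-(r*k : ℕ) : ℤ) * ‖lam‖ ^ k * (p:ℝ) ^ (padicValNat p k.factorial : ℤ)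
      ≤ (p:ℝ) ^ (-(r*k : ℕ) : ℤ) * 1 * (p:ℝ) ^ (padicValNat p k.factorial : ℤ) := by
        have h0 : (0:ℝ) < p := by linarith
        gcongr
    _ = (p:ℝ) ^ ((padicValNat p k.factorial : ℤ) - (r * k : ℕ)) := by
        rw [mul_one, ← zpow_add₀ (by positivity : (p:ℝ) ≠ 0)]
        ring_nf

lemma norm_e_le_one (r : ℕ) (hr : 0 < r) (hp3 : 3 ≤ p) (lam : ℤ_[p]) (k : ℕ) :
    ‖(p : ℚ_[p]) ^ (r * k) * (lam : ℚ_[p]) ^ k / (k.factorial : ℚ_[p])‖ ≤ 1 := by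
  have hp1 : (1:ℝ) < p := by exact_mod_cast hp.out.one_lt
  refine (norm_e r lam k).trans ?_
  have hleg := legendre_bd (p := p) k
  have hv : padicValNat p k.factorial ≤ r * k := by
    have h2 : padicValNat p k.factorial ≤ (p-1) * padicValNat p k.factorial :=
      Nat.le_mul_of_pos_left _ (by omega)
    have h3 : k ≤ r * k := Nat.le_mul_of_pos_left k hr
    omega
  calc (p:ℝ) ^ ((padicValNat p k.factorial : ℤ) - (r * k : ℕ))
      ≤ (p:ℝ) ^ (0:ℤ) := by
        apply zpow_le_zpow_right₀ (le_of_lt hp1)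
        omega
    _ = 1 := zpow_zero _

lemma val_ineq (r s : ℕ) (hr : 0 < r) (hp3 : 3 ≤ p) {a b : ℕ}
    (hab : dTruncR p r s + 1 ≤ a + b) :
    s + padicValNat p a.factorial + padicValNat p b.factorial ≤ r * (a + b) := by
  set P := p - 1 with hP
  have hP2 : 2 ≤ P := by omega
  set M := r * P - 1 with hM
  have hrp : P ≤ r * P := Nat.le_mul_of_pos_left P hr
  have hM1 : 1 ≤ M := by omega
  have hMr : M + 1 = r * P := by omega
  set q := s * P with hq
  set t := q / M with ht
  set u := q % M with hu
  have hdm : M * t + u = q := Nat.div_add_mod q M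
  have huM : u < M := Nat.mod_lt _ (by omega)
  set va := padicValNat p a.factorial
  set vb := padicValNat p b.factorial
  have hva : P * va ≤ a := legendre_bd a
  have hvb : P * vb ≤ b := legendre_bd b
  set k := a + b with hk
  have hD : dTruncR p r s = t + 1 := rfl
  have hk2 : t + 2 ≤ k := by rw [hD] at hab; omega
  have step1 : q + 1 ≤ k * M := by
    have h1 : (t + 2) * M ≤ k * M := Nat.mul_le_mul_right M hk2
    have h2 : (t + 2) * M = t * M + 2 * M := by ring
    have h3 : M * t = t * M := Nat.mul_comm _ _
    omega
  have step2 : (s + va + vb) * P ≤ (r * k) * P := by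
    calc (s + va + vb) * P = q + (P * va + P * vb) := by rw [hq]; ring
      _ ≤ q + k := by omega
      _ ≤ k * M + k := by omega
      _ = k * (M + 1) := by ring
      _ = (r * k) * P := by rw [hMr]; ring
  exact Nat.le_of_mul_le_mul_right step2 (by omega)

lemma norm_e_mul_e (r s : ℕ) (hr : 0 < r) (hp3 : 3 ≤ p) (lam : ℤ_[p]) {a b : ℕ}
    (hab : dTruncR p r s + 1 ≤ a + b) :
    ‖((p : ℚ_[p]) ^ (r * a) * (lam : ℚ_[p]) ^ a / (a.factorial : ℚ_[p]))
      * ((p : ℚ_[p]) ^ (r * b) * (lam : ℚ_[p]) ^ b / (b.factorial : ℚ_[p]))‖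
      ≤ (p:ℝ) ^ (-(s:ℤ)) := by
  have hp1 : (1:ℝ) < p := by exact_mod_cast hp.out.one_lt
  rw [norm_mul]
  have h1 := norm_e (p := p) r lam a
  have h2 := norm_e (p := p) r lam b
  have hv := val_ineq (p := p) r s hr hp3 hab
  calc ‖(p : ℚ_[p]) ^ (r * a) * (lam : ℚ_[p]) ^ a / (a.factorial : ℚ_[p])‖
        * ‖(p : ℚ_[p]) ^ (r * b) * (lam : ℚ_[p]) ^ b / (b.factorial : ℚ_[p])‖
      ≤ (p:ℝ) ^ ((padicValNat p a.factorial : ℤ) - (r * a : ℕ))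
        * (p:ℝ) ^ ((padicValNat p b.factorial : ℤ) - (r * b : ℕ)) := by
        exact mul_le_mul h1 h2 (norm_nonneg _) (by positivity)
    _ = (p:ℝ) ^ (((padicValNat p a.factorial : ℤ) - (r * a : ℕ))
          + ((padicValNat p b.factorial : ℤ) - (r * b : ℕ))) := by
        rw [← zpow_add₀ (by positivity : (p:ℝ) ≠ 0)]
    _ ≤ (p:ℝ) ^ (-(s:ℤ)) := by
        apply zpow_le_zpow_right₀ (le_of_lt hp1)
        have hv' : (s:ℤ) + (padicValNat p a.factorial : ℤ) + (padicValNat p b.factorial : ℤ)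
            ≤ ((r*(a+b) : ℕ) : ℤ) := by exact_mod_cast hv
        have hrab : ((r*(a+b) : ℕ) : ℤ) = ((r*a : ℕ) : ℤ) + ((r*b : ℕ) : ℤ) := by
          push_cast; ring
        omega

lemma DB_delta (D : ℕ) (e : ℕ → ℚ_[p]) (ρ : ℝ) (hρ : 0 ≤ ρ)
    (hemul : ∀ a b : ℕ, D + 1 ≤ a + b → a ≤ D → b ≤ D → ‖e a * e b‖ ≤ ρ)
    (hkey : ∀ m k : ℕ, m ≤ k → e k * (k.choose m : ℚ_[p]) = e m * e (k - m)) :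
    DB ρ ((∑ k ∈ Finset.range (D+1), Polynomial.C (Polynomial.C (e k)) * (X+1)^k)
      - Polynomial.C (Polynomial.C (∑ k ∈ Finset.range (D+1), e k))
        * (∑ k ∈ Finset.range (D+1), Polynomial.C (Polynomial.C (e k)) * X^k)) := by
  intro m j
  have hfst : (∑ k ∈ Finset.range (D+1),
      Polynomial.C (Polynomial.C (e k)) * (X+1)^k).coeff m
      = Polynomial.C (∑ k ∈ Finset.range (D+1), e k * (k.choose m : ℚ_[p])) := by
    rw [finset_sum_coeff, map_sum]
    refine Finset.sum_congr rfl fun k _ => ?_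
    rw [coeff_C_mul, coeff_X_add_one_pow, ← Polynomial.C_eq_natCast, ← Polynomial.C_mul]
  have hsnd : (∑ k ∈ Finset.range (D+1),
      Polynomial.C (Polynomial.C (e k)) * X^k).coeff m
      = if m ∈ Finset.range (D+1) then Polynomial.C (e m) else 0 := by
    rw [finset_sum_coeff]
    calc ∑ k ∈ Finset.range (D+1), (Polynomial.C (Polynomial.C (e k)) * X^k).coeff m
        = ∑ k ∈ Finset.range (D+1), if m = k then Polynomial.C (e m) else 0 :=
          Finset.sum_congr rfl fun k _ => by
            rw [coeff_C_mul, coeff_X_pow]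
            split
            · next h => subst h; simp
            · simp
      _ = _ := Finset.sum_ite_eq _ _ _
  rw [coeff_sub, coeff_C_mul, hfst, hsnd]
  by_cases hm : m ∈ Finset.range (D+1)
  · have hmD : m ≤ D := by simpa [Nat.lt_succ_iff] using hm
    rw [if_pos hm, ← Polynomial.C_mul, ← Polynomial.C_sub]
    set δ : ℚ_[p] := (∑ k ∈ Finset.range (D+1), e k * (k.choose m : ℚ_[p]))
      - (∑ k ∈ Finset.range (D+1), e k) * e m with hδdef
    have hδ : δ = -∑ i ∈ Finset.Ico (D+1-m) (D+1), e m * e i := by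
      have h1a : ∑ k ∈ Finset.range (D+1), e k * (k.choose m : ℚ_[p])
          = ∑ k ∈ Finset.Ico m (D+1), e k * (k.choose m : ℚ_[p]) := by
        have hz : ∑ k ∈ Finset.Ico 0 m, e k * (k.choose m : ℚ_[p]) = 0 := by
          refine Finset.sum_eq_zero fun k hk => ?_
          rw [Nat.choose_eq_zero_of_lt (Finset.mem_Ico.mp hk).2]
          simp
        rw [Finset.range_eq_Ico, ← Finset.sum_Ico_consecutive _ (Nat.zero_le m)
          (Nat.le_succ_of_le hmD), hz, zero_add]
      have h1 : ∑ k ∈ Finset.range (D+1), e k * (k.choose m : ℚ_[p])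
          = ∑ i ∈ Finset.range (D+1-m), e m * e i := by
        rw [h1a, Finset.sum_Ico_eq_sum_range]
        refine Finset.sum_congr rfl fun i _ => ?_
        rw [hkey m (m + i) (Nat.le_add_right _ _), Nat.add_sub_cancel_left]
      have h2 : (∑ k ∈ Finset.range (D+1), e k) * e m
          = ∑ i ∈ Finset.range (D+1), e m * e i := by
        rw [Finset.sum_mul]
        exact Finset.sum_congr rfl fun i _ => mul_comm _ _
      rw [hδdef, h1, h2, Finset.sum_Ico_eq_sub _ (Nat.sub_le _ _)]
      ring
    rw [coeff_C]
    split
    · rw [hδ, norm_neg]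
      refine sum_bd _ _ hρ fun i hi => ?_
      rcases Finset.mem_Ico.mp hi with ⟨hi1, hi2⟩
      exact hemul m i (by omega) hmD (by omega)
    · simpa using hρ
  · have hmD : D < m := by simpa [Nat.lt_succ_iff] using hm
    have hz : (∑ k ∈ Finset.range (D+1), e k * (k.choose m : ℚ_[p])) = 0 := by
      refine Finset.sum_eq_zero fun k hk => ?_
      rw [Nat.choose_eq_zero_of_lt (lt_of_le_of_lt (by simpa [Nat.lt_succ_iff] using hk) hmD)]
      simp
    rw [if_neg hm, hz]
    simpa using hρ


end Helpers

lemma poch_comp_add_one {R : Type*} [CommRing R] (d : ℕ) :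
    (descPochhammer R d).comp (X + 1) =
      descPochhammer R d + (d : R[X]) * descPochhammer R (d - 1) := by
  cases d with
  | zero => simp
  | succ d =>
    have h1 : descPochhammer R (d+1) = X * (descPochhammer R d).comp (X - 1) :=
      descPochhammer_succ_left R d
    have h2 : (X - 1 : R[X]).comp (X + 1) = X := by simp
    have h3 : (descPochhammer R (d+1)).comp (X + 1) = (X + 1) * descPochhammer R d := by
      rw [h1, mul_comp, X_comp, comp_assoc, h2, comp_X]
    rw [h3, descPochhammer_succ_right]
    push_cast
    ring

noncomputable def TT (R : Type*) [CommRing R] :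
    Polynomial (Polynomial R) →+* Polynomial (Polynomial R) :=
  eval₂RingHom ((Polynomial.C : Polynomial R →+* Polynomial (Polynomial R)).comp
    (eval₂RingHom Polynomial.C (X + 1))) (X + 1)

variable {R : Type*} [CommRing R]

lemma TT_C (a : Polynomial R) : TT R (Polynomial.C a) = Polynomial.C (a.comp (X + 1)) := by
  rw [TT, coe_eval₂RingHom]  -- might fail; adjust
  rw [eval₂_C]
  rfl

lemma TT_X : TT R X = X + 1 := by
  rw [TT, coe_eval₂RingHom, eval₂_X]

lemma TT_Cq (q : R) : TT R (Polynomial.C (Polynomial.C q)) = Polynomial.C (Polynomial.C q) := by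
  rw [TT_C, C_comp]

lemma TT_poch (d : ℕ) : TT R (descPochhammer (Polynomial R) d)
    = descPochhammer (Polynomial R) d
      + (d : Polynomial (Polynomial R)) * descPochhammer (Polynomial R) (d - 1) := by
  have h2 : descPochhammer (Polynomial R) d = (descPochhammer R d).map Polynomial.C := by
    rw [descPochhammer_map]
  have h1 : TT R (descPochhammer (Polynomial R) d)
      = (descPochhammer (Polynomial R) d).comp (X + 1) := by
    conv_lhs => rw [h2]
    rw [TT, coe_eval₂RingHom, eval₂_map, comp, h2, eval₂_map]
    apply eval₂_congr _ rfl rfl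
    ext q
    simp [eval₂_C]
  rw [h1, poch_comp_add_one]

lemma TT_factor (k : ℕ) :
    TT R (X - Polynomial.C X - ((k : ℕ) : Polynomial (Polynomial R)))
      = X - Polynomial.C X - ((k : ℕ) : Polynomial (Polynomial R)) := by
  rw [map_sub, map_sub, TT_X, TT_C, X_comp, map_natCast]
  rw [map_add, Polynomial.C_1]
  ring

section Main
variable {p : ℕ} [hp : Fact p.Prime]


lemma qkz_main (D M1 M2 d0 : ℕ) (e : ℕ → ℚ_[p]) (ρ : ℝ) (hρ : 0 ≤ ρ)
    (he1 : ∀ k, ‖e k‖ ≤ 1)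
    (hemul : ∀ a b : ℕ, D + 1 ≤ a + b → a ≤ D → b ≤ D → ‖e a * e b‖ ≤ ρ)
    (hkey : ∀ m k : ℕ, m ≤ k → e k * (k.choose m : ℚ_[p]) = e m * e (k - m))
    (hd0 : ‖((d0 + 1 : ℕ) : ℚ_[p])‖ ≤ ρ)
    (c : ℕ →₀ Polynomial ℚ_[p])
    (hc : (∑ k ∈ Finset.range (D + 1), Polynomial.C (Polynomial.C (e k)) * X ^ k) *
          (∏ i ∈ Finset.range M1,
            (X - Polynomial.C X - ((i + 1 : ℕ) : Polynomial (Polynomial ℚ_[p])))) *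
          (∏ i ∈ Finset.range M2,
            (X - Polynomial.C X - ((i + 1 : ℕ) : Polynomial (Polynomial ℚ_[p]))))
          = c.sum fun d cd => Polynomial.C cd * descPochhammer (Polynomial ℚ_[p]) d) :
    ∀ n : ℕ, ‖(Polynomial.C (∑ k ∈ Finset.range (D + 1), e k) * (c d0).comp (X - 1)
        - c d0).coeff n‖ ≤ ρ := by
  classical
  set E := ∑ k ∈ Finset.range (D + 1), Polynomial.C (Polynomial.C (e k)) * X ^ k with hE
  set P1 := ∏ i ∈ Finset.range M1,
    (X - Polynomial.C X - ((i + 1 : ℕ) : Polynomial (Polynomial ℚ_[p]))) with hP1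
  set P2 := ∏ i ∈ Finset.range M2,
    (X - Polynomial.C X - ((i + 1 : ℕ) : Polynomial (Polynomial ℚ_[p]))) with hP2
  set B := c.support.sup id + 1 with hBdef
  have hB : ∀ d, B ≤ d → c d = 0 := by
    intro d hd
    by_contra h
    have h1 : d ∈ c.support := Finsupp.mem_support_iff.mpr h
    have h2 := Finset.le_sup (f := id) h1
    simp only [id] at h2
    omega
  have hcB : E * P1 * P2 = ∑ d ∈ Finset.range B,
      Polynomial.C (c d) * descPochhammer (Polynomial ℚ_[p]) d := by
    rw [hc]
    refine Finsupp.sum_of_support_subset _ ?_ _ ?_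
    · intro d hd
      refine Finset.mem_range.mpr ?_
      have h3 := Finset.le_sup (f := id) hd
      simp only [id] at h3
      omega
    · intro i _; simp
  -- integrality of c
  have hΦ1 : DB 1 (E * P1 * P2) := by
    have h1 : DB (p := p) 1 E := DB_sumCX _ _ zero_le_one he1
    have h2 : DB (p := p) 1 P1 := DB_prod _ _ fun i _ => DB_factor (i+1)
    have h3 : DB (p := p) 1 P2 := DB_prod _ _ fun i _ => DB_factor (i+1)
    have h12 : DB (p := p) 1 (E * P1) := by
      simpa using DB_mul zero_le_one zero_le_one h1 h2
    simpa using DB_mul zero_le_one zero_le_one h12 h3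
  have hint : ∀ d n, ‖(c d).coeff n‖ ≤ 1 :=
    extract zero_le_one B (fun d => c d) hB (by rw [← hcB]; exact hΦ1)
  -- the deformed polynomial
  set E₀ : ℚ_[p] := ∑ k ∈ Finset.range (D + 1), e k with hE₀
  set b : ℕ → Polynomial ℚ_[p] := fun d =>
    (c d).comp (X + 1) + ((d + 1 : ℕ) : Polynomial ℚ_[p]) * (c (d + 1)).comp (X + 1)
      - Polynomial.C E₀ * c d with hbdef
  have hbB : ∀ d, B ≤ d → b d = 0 := by
    intro d hd
    simp [hbdef, hB d hd, hB (d+1) (by omega)]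
  -- functional equation: expansion of T Φ - C (C E₀) Φ in the Pochhammer basis
  have hTE : TT ℚ_[p] E = ∑ k ∈ Finset.range (D + 1),
      Polynomial.C (Polynomial.C (e k)) * (X + 1) ^ k := by
    rw [hE, map_sum]
    refine Finset.sum_congr rfl fun k _ => ?_
    rw [map_mul, map_pow, TT_Cq, TT_X]
  have hTP1 : TT ℚ_[p] P1 = P1 := by
    rw [hP1, map_prod]
    exact Finset.prod_congr rfl fun i _ => TT_factor (i+1)
  have hTP2 : TT ℚ_[p] P2 = P2 := by
    rw [hP2, map_prod]
    exact Finset.prod_congr rfl fun i _ => TT_factor (i+1)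
  have hDBsum : DB ρ (TT ℚ_[p] (E * P1 * P2)
      - Polynomial.C (Polynomial.C E₀) * (E * P1 * P2)) := by
    have hfact : TT ℚ_[p] (E * P1 * P2) - Polynomial.C (Polynomial.C E₀) * (E * P1 * P2)
        = (TT ℚ_[p] E - Polynomial.C (Polynomial.C E₀) * E) * (P1 * P2) := by
      rw [map_mul, map_mul, hTP1, hTP2]
      ring
    rw [hfact]
    have hδ : DB ρ (TT ℚ_[p] E - Polynomial.C (Polynomial.C E₀) * E) := by
      rw [hTE, hE, hE₀]
      exact DB_delta D e ρ hρ hemul hkey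
    have hP : DB (p := p) 1 (P1 * P2) := by
      have h2 : DB (p := p) 1 P1 := DB_prod _ _ fun i _ => DB_factor (i+1)
      have h3 : DB (p := p) 1 P2 := DB_prod _ _ fun i _ => DB_factor (i+1)
      simpa using DB_mul zero_le_one zero_le_one h2 h3
    simpa using DB_mul hρ zero_le_one hδ hP
  -- expansion
  have hshift : ∑ d ∈ Finset.range B, Polynomial.C ((c d).comp (X + 1))
        * ((d : Polynomial (Polynomial ℚ_[p])) * descPochhammer (Polynomial ℚ_[p]) (d - 1))
      = ∑ d ∈ Finset.range B,
        Polynomial.C (((d + 1 : ℕ) : Polynomial ℚ_[p]) * (c (d + 1)).comp (X + 1))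
          * descPochhammer (Polynomial ℚ_[p]) d := by
    set f : ℕ → Polynomial (Polynomial ℚ_[p]) := fun d => Polynomial.C ((c d).comp (X + 1))
      * ((d : Polynomial (Polynomial ℚ_[p])) * descPochhammer (Polynomial ℚ_[p]) (d - 1)) with hf
    have hf0 : f 0 = 0 := by simp [hf]
    have hfB : f B = 0 := by simp [hf, hB B le_rfl]
    have h1 : ∑ d ∈ Finset.range (B + 1), f d = ∑ d ∈ Finset.range B, f d := by
      rw [Finset.sum_range_succ, hfB, add_zero]
    have h2 : ∑ d ∈ Finset.range (B + 1), f d = ∑ d ∈ Finset.range B, f (d + 1) := by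
      rw [Finset.sum_range_succ', hf0, add_zero]
    rw [← h1, h2]
    refine Finset.sum_congr rfl fun d _ => ?_
    simp only [hf, Nat.add_sub_cancel, map_mul, Polynomial.C_eq_natCast]
    push_cast
    ring
  have hexp : TT ℚ_[p] (E * P1 * P2) - Polynomial.C (Polynomial.C E₀) * (E * P1 * P2)
      = ∑ d ∈ Finset.range B, Polynomial.C (b d) * descPochhammer (Polynomial ℚ_[p]) d := by
    rw [hcB, map_sum, Finset.mul_sum, ← Finset.sum_sub_distrib]
    have hterm : ∀ d, TT ℚ_[p] (Polynomial.C (c d) * descPochhammer (Polynomial ℚ_[p]) d)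
        - Polynomial.C (Polynomial.C E₀)
          * (Polynomial.C (c d) * descPochhammer (Polynomial ℚ_[p]) d)
        = (Polynomial.C ((c d).comp (X + 1)) * descPochhammer (Polynomial ℚ_[p]) d
            + Polynomial.C ((c d).comp (X + 1))
              * ((d : Polynomial (Polynomial ℚ_[p])) * descPochhammer (Polynomial ℚ_[p]) (d - 1)))
          - Polynomial.C (Polynomial.C E₀ * c d) * descPochhammer (Polynomial ℚ_[p]) d := by
      intro d
      rw [map_mul, TT_C, TT_poch, map_mul]
      ring
    rw [Finset.sum_congr rfl fun d _ => hterm d]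
    rw [Finset.sum_sub_distrib, Finset.sum_add_distrib, hshift]
    rw [← Finset.sum_add_distrib, ← Finset.sum_sub_distrib]
    refine Finset.sum_congr rfl fun d _ => ?_
    rw [hbdef]
    simp only [map_add, map_sub]
    ring
  have hsmall : ∀ d n, ‖(b d).coeff n‖ ≤ ρ := by
    refine extract hρ B b hbB ?_
    rw [← hexp]
    exact hDBsum
  -- conclusion
  intro n
  have hb0 := hsmall d0 n
  have hw : ∀ n, ‖(((d0 + 1 : ℕ) : Polynomial ℚ_[p]) * (c (d0 + 1)).comp (X + 1)).coeff n‖ ≤ ρ := by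
    intro m
    have h1 : (((d0 + 1 : ℕ) : Polynomial ℚ_[p]) * (c (d0 + 1)).comp (X + 1)).coeff m
        = ((d0 + 1 : ℕ) : ℚ_[p]) * ((c (d0 + 1)).comp (X + 1)).coeff m := by
      rw [← Polynomial.C_eq_natCast, coeff_C_mul]
    rw [h1]
    have hcomp : ∀ m, ‖((c (d0 + 1)).comp (X + 1)).coeff m‖ ≤ 1 := by
      have := comp_bd (p := p) 1 (by simp) zero_le_one (c (d0 + 1)) (hint (d0 + 1))
      simpa using this
    calc ‖((d0 + 1 : ℕ) : ℚ_[p]) * ((c (d0 + 1)).comp (X + 1)).coeff m‖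
        ≤ ‖((d0 + 1 : ℕ) : ℚ_[p])‖ * ‖((c (d0 + 1)).comp (X + 1)).coeff m‖ := norm_mul_le _ _
      _ ≤ ρ * 1 := mul_le_mul hd0 (hcomp m) (norm_nonneg _) hρ
      _ = ρ := mul_one ρ
  have hv : ∀ n, ‖((c d0).comp (X + 1) - Polynomial.C E₀ * c d0).coeff n‖ ≤ ρ := by
    intro m
    have h1 : (c d0).comp (X + 1) - Polynomial.C E₀ * c d0
        = b d0 - ((d0 + 1 : ℕ) : Polynomial ℚ_[p]) * (c (d0 + 1)).comp (X + 1) := by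
      rw [hbdef]; ring
    rw [h1, coeff_sub, sub_eq_add_neg]
    refine (IsUltrametricDist.norm_add_le_max _ _).trans (max_le (hsmall d0 m) ?_)
    rw [norm_neg]
    exact hw m
  -- apply comp with X - 1
  have hτ : ∀ n, ‖(((c d0).comp (X + 1) - Polynomial.C E₀ * c d0).comp (X - 1)).coeff n‖ ≤ ρ := by
    have hx : (X - 1 : Polynomial ℚ_[p]) = X + Polynomial.C (-1) := by
      rw [map_neg, Polynomial.C_1]; ring
    intro m
    rw [hx]
    exact comp_bd (-1) (by simp) hρ _ hv m
  have hfinal : ((c d0).comp (X + 1) - Polynomial.C E₀ * c d0).comp (X - 1)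
      = c d0 - Polynomial.C E₀ * (c d0).comp (X - 1) := by
    rw [sub_comp, mul_comp, C_comp, comp_assoc]
    congr 1
    have : (X + 1 : Polynomial ℚ_[p]).comp (X - 1) = X := by simp
    rw [this, comp_X]
  have hneg : Polynomial.C E₀ * (c d0).comp (X - 1) - c d0
      = -(((c d0).comp (X + 1) - Polynomial.C E₀ * c d0).comp (X - 1)) := by
    rw [hfinal]; ring
  rw [hE₀] at hneg
  rw [hneg, coeff_neg, norm_neg]
  exact hτ n


end Main


section EKey
variable {p : ℕ} [hp : Fact p.Prime]

lemma e_key (r : ℕ) (lam : ℤ_[p]) {m k : ℕ} (hmk : m ≤ k) :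
    ((p : ℚ_[p]) ^ (r * k) * (lam : ℚ_[p]) ^ k / (k.factorial : ℚ_[p])) * (k.choose m : ℚ_[p])
      = ((p : ℚ_[p]) ^ (r * m) * (lam : ℚ_[p]) ^ m / (m.factorial : ℚ_[p]))
        * ((p : ℚ_[p]) ^ (r * (k - m)) * (lam : ℚ_[p]) ^ (k - m) / ((k - m).factorial : ℚ_[p])) := by
  have hm : (m.factorial : ℚ_[p]) ≠ 0 := Nat.cast_ne_zero.mpr m.factorial_ne_zero
  have hkm : ((k - m).factorial : ℚ_[p]) ≠ 0 := Nat.cast_ne_zero.mpr (k - m).factorial_ne_zero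
  have hk : (k.factorial : ℚ_[p]) ≠ 0 := Nat.cast_ne_zero.mpr k.factorial_ne_zero
  have hch : (k.choose m : ℚ_[p]) * (m.factorial : ℚ_[p]) * ((k - m).factorial : ℚ_[p])
      = (k.factorial : ℚ_[p]) := by
    exact_mod_cast congrArg (Nat.cast : ℕ → ℚ_[p]) (Nat.choose_mul_factorial_mul_factorial hmk)
  have hadd : m + (k - m) = k := Nat.add_sub_cancel' hmk
  have hpow : (p : ℚ_[p]) ^ (r * m) * (p : ℚ_[p]) ^ (r * (k - m)) = (p : ℚ_[p]) ^ (r * k) := by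
    rw [← pow_add]
    congr 1
    calc r * m + r * (k - m) = r * (m + (k - m)) := by ring
      _ = r * k := by rw [hadd]
  have hlam : (lam : ℚ_[p]) ^ m * (lam : ℚ_[p]) ^ (k - m) = (lam : ℚ_[p]) ^ k := by
    rw [← pow_add, hadd]
  rw [div_mul_div_comm, div_mul_eq_mul_div, div_eq_div_iff hk (mul_ne_zero hm hkm),
    ← hpow, ← hlam]
  linear_combination ((p : ℚ_[p]) ^ (r * m) * (p : ℚ_[p]) ^ (r * (k - m))
    * (lam : ℚ_[p]) ^ m * (lam : ℚ_[p]) ^ (k - m)) * hch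

end EKey


/-- Let `p` be an odd prime, `s, r` positive integers, and `λ ∈ ℤ_p`.
Define the master polynomial
`Φ_{r,s}(t,z,λ) = E_{r,s}(p^r λ t)·(t−z−1)_{(p^s−1)/2}·(t−z−1)_{(p^s+1)/2}`
(a polynomial in `t` over `ℚ_p[z]`, with coefficients in `ℤ_p`), where
`E_{r,s}(x) = Σ_{k=0}^{d(r,s)} x^k/k!` and `(u)_m = ∏_{i=1}^m (u−i+1)` is the Pochhammer
polynomial, so `(t−z−1)_m = ∏_{i=1}^m (t−z−i)`. Expand `Φ_{r,s}` in the variable `t` in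
the basis of Pochhammer polynomials `(t)_d`: `Φ_{r,s} = Σ_d c_d(z,λ)·(t)_d`, and set
`I_{r,s}(z,λ) = c_{p^s−1}(z,λ)`. Then `I_{r,s}` solves the qKZ difference equation
modulo `p^s`: `E_{r,s}(p^r λ)·I_{r,s}(z−1,λ) ≡ I_{r,s}(z,λ) (mod p^s)`, i.e., every
coefficient of the difference (as a polynomial in `z`) lies in `p^s ℤ_p`. -/
theorem qkz_solution_mod_ps (p : ℕ) [Fact p.Prime] (hodd : Odd p)
    (r s : ℕ) (hr : 0 < r) (hs : 0 < s) (lam : ℤ_[p])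
    (c : ℕ →₀ Polynomial ℚ_[p])
    (hc : ((∑ k ∈ Finset.range (dTruncR p r s + 1),
            Polynomial.C (Polynomial.C ((p : ℚ_[p]) ^ (r * k) * (lam : ℚ_[p]) ^ k /
              (k.factorial : ℚ_[p]))) * Polynomial.X ^ k) *
          (∏ i ∈ Finset.range ((p ^ s - 1) / 2),
            (Polynomial.X - Polynomial.C Polynomial.X - ((i + 1 : ℕ) : Polynomial (Polynomial ℚ_[p])))) *
          (∏ i ∈ Finset.range ((p ^ s + 1) / 2),
            (Polynomial.X - Polynomial.C Polynomial.X - ((i + 1 : ℕ) : Polynomial (Polynomial ℚ_[p])))) :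
            Polynomial (Polynomial ℚ_[p])) =
        c.sum fun d cd => Polynomial.C cd * descPochhammer (Polynomial ℚ_[p]) d) :
    ∀ n : ℕ,
      ‖(Polynomial.C (∑ k ∈ Finset.range (dTruncR p r s + 1),
            (p : ℚ_[p]) ^ (r * k) * (lam : ℚ_[p]) ^ k / (k.factorial : ℚ_[p])) *
          (c (p ^ s - 1)).comp (Polynomial.X - 1) -
            c (p ^ s - 1)).coeff n‖ ≤ (p : ℝ) ^ (-(s : ℤ)) := by
  have hp := ‹Fact p.Prime›
  have hp3 : 3 ≤ p := by
    obtain ⟨m, hm⟩ := hodd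
    have := hp.out.two_le
    omega
  have hps : p ^ s - 1 + 1 = p ^ s := Nat.succ_pred_eq_of_pos (pow_pos hp.out.pos s)
  refine qkz_main (dTruncR p r s) ((p ^ s - 1) / 2) ((p ^ s + 1) / 2) (p ^ s - 1)
    (fun k => (p : ℚ_[p]) ^ (r * k) * (lam : ℚ_[p]) ^ k / (k.factorial : ℚ_[p]))
    ((p : ℝ) ^ (-(s : ℤ))) ?_ ?_ ?_ ?_ ?_ c hc
  · positivity
  · exact fun k => norm_e_le_one r hr hp3 lam k
  · exact fun a b hab _ _ => norm_e_mul_e r s hr hp3 lam hab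
  · intro m k hmk
    exact e_key r lam hmk
  · rw [hps]
    have : ((p ^ s : ℕ) : ℚ_[p]) = (p : ℚ_[p]) ^ s := by push_cast; ring
    rw [this, Padic.norm_p_pow]
end
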